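/- arXiv:2105.08309 — 10 statements merged into one kernel-verified Lean document; each statement's English description precedes it below -/
import Mathlib

section
/- Let H be a finite-dimensional complex inner product space, let Π and Λ be orthogonal projections on H, and let U = (2Π − I)(2Λ − I). For Θ ∈ [0, π], let P_Θ denote the orthogonal projection onto the span of all eigenvectors of U whose eigenvalue is e^{iθ} for some θ ∈ (−π, π] with |θ| ≤ Θ. Then for every u ∈ H with Λu = 0 one has ‖P_Θ Π u‖ ≤ (Θ/2)·‖u‖. -/
open scoped InnerProductSpace

noncomputable section

/-- `P` is an orthogonal projection: idempotent and symmetric. -/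
def IsOrthProj {H : Type*} [NormedAddCommGroup H] [InnerProductSpace ℂ H]
    (P : H →ₗ[ℂ] H) : Prop :=
  P ∘ₗ P = P ∧ ∀ x y : H, ⟪P x, y⟫_ℂ = ⟪x, P y⟫_ℂ

section Aux

variable {H : Type*} [NormedAddCommGroup H] [InnerProductSpace ℂ H]

lemma esg_refl_apply (P : H →ₗ[ℂ] H) (z : H) :
    (2 • P - LinearMap.id : H →ₗ[ℂ] H) z = P z + P z - z := by
  simp [two_smul]

lemma esg_refl_invol (P : H →ₗ[ℂ] H) (hP : IsOrthProj P) (z : H) :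
    (2 • P - LinearMap.id : H →ₗ[ℂ] H) ((2 • P - LinearMap.id : H →ₗ[ℂ] H) z) = z := by
  have h : P (P z) = P z := congrFun (congrArg DFunLike.coe hP.1) z
  simp only [esg_refl_apply, map_sub, map_add, h]
  abel

lemma esg_refl_sym (P : H →ₗ[ℂ] H) (hP : IsOrthProj P) (x y : H) :
    ⟪(2 • P - LinearMap.id : H →ₗ[ℂ] H) x, y⟫_ℂ
      = ⟪x, (2 • P - LinearMap.id : H →ₗ[ℂ] H) y⟫_ℂ := by
  rw [esg_refl_apply, esg_refl_apply, inner_sub_left, inner_sub_right,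
    inner_add_left, inner_add_right, hP.2]

/-- On the span of the nonnegative eigenspaces, a symmetric operator is nonnegative. -/
lemma esg_nonneg_on_sup [FiniteDimensional ℂ H] (B : H →ₗ[ℂ] H)
    (hB : LinearMap.IsSymmetric B) {x : H}
    (hx : x ∈ ⨆ (μ : ℝ) (_ : 0 ≤ μ), Module.End.eigenspace B (μ : ℂ)) :
    0 ≤ (⟪x, B x⟫_ℂ).re := by
  set n := Module.finrank ℂ H with hn
  set b := hB.eigenvectorBasis rfl with hb
  set μ := hB.eigenvalues (n := n) rfl with hμ
  have hrepr : ∀ i, b.repr (B x) i = (μ i : ℂ) * b.repr x i := by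
    intro i
    simpa using hB.eigenvectorBasis_apply_self_apply rfl x i
  have hinner : ⟪x, B x⟫_ℂ = ∑ i, (starRingEnd ℂ) (b.repr x i) * ((μ i : ℂ) * b.repr x i) := by
    rw [← b.repr.inner_map_map x (B x)]
    simp only [PiLp.inner_apply, RCLike.inner_apply, hrepr]
    exact Finset.sum_congr rfl (fun i _ => by ring)
  rw [hinner, Complex.re_sum]
  apply Finset.sum_nonneg
  intro i _
  rcases le_or_gt 0 (μ i) with hpos | hneg
  · have : ((starRingEnd ℂ) (b.repr x i) * ((μ i : ℂ) * b.repr x i)).re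
        = μ i * Complex.normSq (b.repr x i) := by
      simp [Complex.normSq_apply, Complex.mul_re, Complex.mul_im]
      ring
    rw [this]
    exact mul_nonneg hpos (Complex.normSq_nonneg _)
  · have hci : b.repr x i = 0 := by
      rw [b.repr_apply_apply]
      have hK : (⨆ (ν : ℝ) (_ : 0 ≤ ν), Module.End.eigenspace B (ν : ℂ))
          ≤ LinearMap.ker ((innerₛₗ ℂ (E := H)) (b i)) := by
        apply iSup_le; intro ν; apply iSup_le; intro hν
        intro y hy
        have hyB : B y = (ν : ℂ) • y := Module.End.mem_eigenspace_iff.mp hy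
        have hbB : B (b i) = (μ i : ℂ) • b i := hB.apply_eigenvectorBasis rfl i
        have hsym := hB (b i) y
        rw [hyB, hbB, inner_smul_left, inner_smul_right, Complex.conj_ofReal] at hsym
        have hne : (μ i : ℂ) ≠ (ν : ℂ) := by
          exact_mod_cast ne_of_lt (lt_of_lt_of_le hneg hν)
        have h0 := sub_eq_zero.mpr hsym
        rw [← sub_mul] at h0
        rcases mul_eq_zero.mp h0 with h | h
        · exact absurd (sub_eq_zero.mp h) hne
        · simpa [LinearMap.mem_ker] using h
      simpa using hK hx
    simp [hci]

end Aux

/-- **Effective spectral gap lemma.**  Let `Π` and `Λ` be orthogonal projections on a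
finite-dimensional complex inner product space `H`, let `U = (2Π − I)(2Λ − I)`, and for
`Θ ∈ [0, π]` let `P_Θ` be the orthogonal projection onto the span of all eigenvectors of `U`
with eigenvalue `e^{iθ}`, `θ ∈ (−π, π]`, `|θ| ≤ Θ`.  Then `Λ u = 0` implies
`‖P_Θ (Π u)‖ ≤ (Θ/2)·‖u‖`. -/
theorem effective_spectral_gap
    {H : Type*} [NormedAddCommGroup H] [InnerProductSpace ℂ H] [FiniteDimensional ℂ H]
    (Pi Lam : H →ₗ[ℂ] H) (hPi : IsOrthProj Pi) (hLam : IsOrthProj Lam)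
    (U : H →ₗ[ℂ] H)
    (hU : U = (2 • Pi - LinearMap.id) ∘ₗ (2 • Lam - LinearMap.id))
    (Θ : ℝ) (hΘ : Θ ∈ Set.Icc (0 : ℝ) Real.pi)
    (PΘ : H →ₗ[ℂ] H) (hPΘ : IsOrthProj PΘ)
    (hPΘrange : LinearMap.range PΘ = Submodule.span ℂ
      {u : H | ∃ θ : ℝ, θ ∈ Set.Ioc (-Real.pi) Real.pi ∧ |θ| ≤ Θ ∧
        U u = Complex.exp (θ * Complex.I) • u})
    (u : H) (hu : Lam u = 0) :
    ‖PΘ (Pi u)‖ ≤ (Θ / 2) * ‖u‖ := by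
  set RP : H →ₗ[ℂ] H := 2 • Pi - LinearMap.id with hRP
  set RL : H →ₗ[ℂ] H := 2 • Lam - LinearMap.id with hRL
  set V : H →ₗ[ℂ] H := RL ∘ₗ RP with hV
  have hUapp : ∀ z, U z = RP (RL z) := by intro z; rw [hU]; rfl
  have hVapp : ∀ z, V z = RL (RP z) := fun z => rfl
  have hUV : ∀ z, U (V z) = z := by
    intro z
    rw [hUapp, hVapp, esg_refl_invol Lam hLam, esg_refl_invol Pi hPi]
  have hVU : ∀ z, V (U z) = z := by
    intro z
    rw [hUapp, hVapp, esg_refl_invol Pi hPi, esg_refl_invol Lam hLam]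
  have hadjU : ∀ x y, ⟪U x, y⟫_ℂ = ⟪x, V y⟫_ℂ := by
    intro x y
    rw [hUapp, hVapp, esg_refl_sym Pi hPi, esg_refl_sym Lam hLam]
  have hadjV : ∀ x y, ⟪V x, y⟫_ℂ = ⟪x, U y⟫_ℂ := by
    intro x y
    rw [hUapp, hVapp, esg_refl_sym Lam hLam, esg_refl_sym Pi hPi]
  set B : H →ₗ[ℂ] H := U + V + (((Θ ^ 2 - 2 : ℝ) : ℂ) • LinearMap.id) with hB
  have hBapp : ∀ z, B z = U z + V z + ((Θ ^ 2 - 2 : ℝ) : ℂ) • z := by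
    intro z; simp [hB]
  have hBsym : LinearMap.IsSymmetric B := by
    intro x y
    rw [hBapp, hBapp, inner_add_left, inner_add_right, inner_add_left, inner_add_right,
      inner_smul_left, inner_smul_right, hadjU, hadjV, Complex.conj_ofReal]
    ring
  -- the span of the relevant eigenvectors lies in nonneg eigenspaces of B
  set S : Set H := {v : H | ∃ θ : ℝ, θ ∈ Set.Ioc (-Real.pi) Real.pi ∧ |θ| ≤ Θ ∧
        U v = Complex.exp (θ * Complex.I) • v} with hS
  have hSle : Submodule.span ℂ S ≤ ⨆ (ν : ℝ) (_ : 0 ≤ ν), Module.End.eigenspace B (ν : ℂ) := by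
    rw [Submodule.span_le]
    rintro v ⟨θ, _, hθle, hUv⟩
    have hVv : V v = (Complex.exp (θ * Complex.I))⁻¹ • v := by
      have h1 : V (U v) = v := hVU v
      rw [hUv, map_smul] at h1
      have h2 := congrArg (fun z => (Complex.exp (θ * Complex.I))⁻¹ • z) h1
      simp only [smul_smul, inv_mul_cancel₀ (Complex.exp_ne_zero _), one_smul] at h2
      exact h2
    have hsum : Complex.exp (θ * Complex.I) + (Complex.exp (θ * Complex.I))⁻¹
        = 2 * Complex.cos θ := by
      rw [← Complex.exp_neg, ← neg_mul, Complex.exp_mul_I, Complex.exp_mul_I,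
        Complex.cos_neg, Complex.sin_neg]
      ring
    set β : ℝ := Θ ^ 2 - 2 + 2 * Real.cos θ with hβ
    have hβnn : 0 ≤ β := by
      have h1 : Real.cos θ = 2 * Real.cos (θ / 2) ^ 2 - 1 := by
        have := Real.cos_two_mul (θ / 2)
        rwa [show 2 * (θ / 2) = θ by ring] at this
      have h2 : Real.sin (θ / 2) ^ 2 + Real.cos (θ / 2) ^ 2 = 1 := Real.sin_sq_add_cos_sq _
      have h3 : Real.sin (θ / 2) ^ 2 ≤ (θ / 2) ^ 2 := Real.sin_sq_le_sq
      have h4 : θ ^ 2 ≤ Θ ^ 2 := by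
        rcases abs_le.mp hθle with ⟨ha, hb⟩
        exact sq_le_sq' ha hb
      nlinarith
    have hmem : v ∈ Module.End.eigenspace B ((β : ℝ) : ℂ) := by
      rw [Module.End.mem_eigenspace_iff, hBapp, hUv, hVv, ← add_smul, ← add_smul, hsum]
      congr 1
      rw [hβ]
      push_cast [Complex.ofReal_cos]
      ring
    exact Submodule.mem_iSup_of_mem β (Submodule.mem_iSup_of_mem hβnn hmem)
  -- norm bound on the span
  have hkey : ∀ x ∈ Submodule.span ℂ S, ‖x - V x‖ ≤ Θ * ‖x‖ := by
    intro x hx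
    have hxB : 0 ≤ (⟪x, B x⟫_ℂ).re := esg_nonneg_on_sup B hBsym (hSle hx)
    have hnorm : ∀ z : H, (⟪z, z⟫_ℂ).re = ‖z‖ ^ 2 := by
      intro z
      have := @inner_self_eq_norm_sq ℂ _ _ _ _ z
      simpa using this
    have hid : ⟪x - V x, x - V x⟫_ℂ + ⟪x, B x⟫_ℂ = ((Θ ^ 2 : ℝ) : ℂ) * ⟪x, x⟫_ℂ := by
      have e1 : ⟪V x, V x⟫_ℂ = ⟪x, x⟫_ℂ := by rw [hadjV, hUV]
      have e2 : ⟪V x, x⟫_ℂ = ⟪x, U x⟫_ℂ := hadjV x x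
      rw [inner_sub_left, inner_sub_right, inner_sub_right, hBapp, inner_add_right,
        inner_add_right, inner_smul_right, e1, e2]
      push_cast
      ring
    have hre := congrArg Complex.re hid
    rw [Complex.add_re] at hre
    have hn1 : (⟪x - V x, x - V x⟫_ℂ).re = ‖x - V x‖ ^ 2 := hnorm _
    have hn2 : (((Θ ^ 2 : ℝ) : ℂ) * ⟪x, x⟫_ℂ).re = Θ ^ 2 * ‖x‖ ^ 2 := by
      rw [Complex.re_ofReal_mul, hnorm]
    rw [hn1, hn2] at hre
    have hsq : ‖x - V x‖ ^ 2 ≤ (Θ * ‖x‖) ^ 2 := by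
      rw [mul_pow]; linarith
    have := Real.sqrt_le_sqrt hsq
    rwa [Real.sqrt_sq (norm_nonneg _),
      Real.sqrt_sq (mul_nonneg hΘ.1 (norm_nonneg _))] at this
  -- assemble
  set w : H := PΘ (Pi u) with hw
  have hw1 : ⟪w, w⟫_ℂ = ⟪Pi u, w⟫_ℂ := by
    have hP2 : PΘ (PΘ (Pi u)) = PΘ (Pi u) := congrFun (congrArg DFunLike.coe hPΘ.1) (Pi u)
    calc ⟪w, w⟫_ℂ = ⟪Pi u, PΘ w⟫_ℂ := hPΘ.2 (Pi u) w
      _ = ⟪Pi u, w⟫_ℂ := by rw [hw, hP2]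
  have hUu : U u = u - (Pi u + Pi u) := by
    rw [hUapp]
    have hRLu : RL u = -u := by rw [hRL, esg_refl_apply, hu]; abel
    rw [hRLu, map_neg, hRP, esg_refl_apply]
    abel
  have h2 : ⟪Pi u + Pi u, w⟫_ℂ = ⟪u, w - V w⟫_ℂ := by
    have : (Pi u + Pi u : H) = u - U u := by rw [hUu]; abel
    rw [this, inner_sub_left, hadjU, ← inner_sub_right]
  have hwspan : w ∈ Submodule.span ℂ S := by
    rw [← hPΘrange]
    exact ⟨Pi u, rfl⟩
  have hchain : 2 * ‖w‖ ^ 2 ≤ ‖u‖ * (Θ * ‖w‖) := by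
    have hl : 2 * ‖w‖ ^ 2 = (⟪Pi u + Pi u, w⟫_ℂ).re := by
      rw [inner_add_left, ← hw1, Complex.add_re]
      have hnw : ∀ z : H, (⟪z, z⟫_ℂ).re = ‖z‖ ^ 2 := by
        intro z
        have := @inner_self_eq_norm_sq ℂ _ _ _ _ z
        simpa using this
      rw [hnw]; ring
    rw [hl, h2]
    calc (⟪u, w - V w⟫_ℂ).re ≤ ‖⟪u, w - V w⟫_ℂ‖ := Complex.re_le_norm _
      _ = ‖⟪u, w - V w⟫_ℂ‖ := rfl
      _ ≤ ‖u‖ * ‖w - V w‖ := norm_inner_le_norm u _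
      _ ≤ ‖u‖ * (Θ * ‖w‖) := by
          exact mul_le_mul_of_nonneg_left (hkey w hwspan) (norm_nonneg u)
  have hΘu : 0 ≤ Θ * ‖u‖ := mul_nonneg hΘ.1 (norm_nonneg u)
  nlinarith [norm_nonneg w, norm_nonneg u, sq_nonneg (2 * ‖w‖ - Θ * ‖u‖)]

end
end

section
/- Suppose w ∈ H satisfies A w = z₀ − z_k and ‖w‖² ≤ W⁺, and set ψ := φ₊ − (ε/√W⁺)·(0, w) ∈ ℂ^{m+1} ⊕ H. Then M ψ = 0 and |⟨φ₊, ψ⟩|² ≥ (1 − ε²)·‖ψ‖². -/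
open scoped InnerProductSpace

noncomputable section

/-- Setup of Theorem 4 (span-program compilation):  `M : ℂ^{m+1} ⊕ H → V` is the map with
columns `(√2 ε/√W⁺) z₀, −(√2 ε/√W⁺) z₁, …, −(√2 ε/√W⁺) z_m` on the `ℂ^{m+1}` summand and `A`
on the `H` summand.  If `w` is a positive witness, i.e. `A w = z₀ − z_k` and `‖w‖² ≤ W⁺`, and
`ψ := φ₊ − (ε/√W⁺)·(0, w)` with `φ₊ := ((e₀ + e_k)/√2, 0)`, then `M ψ = 0` and
`|⟨φ₊, ψ⟩|² ≥ (1 − ε²)·‖ψ‖²`. -/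
theorem positive_witness_kernel_overlap
    {V H : Type*}
    [NormedAddCommGroup V] [InnerProductSpace ℂ V] [FiniteDimensional ℂ V]
    [NormedAddCommGroup H] [InnerProductSpace ℂ H] [FiniteDimensional ℂ H]
    (A : H →ₗ[ℂ] V) (ε Wp : ℝ) (hε : 0 < ε) (hWp : 0 < Wp)
    (m : ℕ) (hm : 1 ≤ m) (k : Fin (m + 1)) (hk : k ≠ 0)
    (z : Fin (m + 1) → V)
    (M : WithLp 2 (EuclideanSpace ℂ (Fin (m + 1)) × H) →ₗ[ℂ] V)
    (hM : ∀ (c : EuclideanSpace ℂ (Fin (m + 1))) (h : H),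
      M ((WithLp.equiv 2 (EuclideanSpace ℂ (Fin (m + 1)) × H)).symm (c, h)) =
        ((Real.sqrt 2 * ε / Real.sqrt Wp : ℝ) : ℂ) •
          (c 0 • z 0 - ∑ α ∈ Finset.univ.filter (fun α : Fin (m + 1) => α ≠ 0), c α • z α)
        + A h)
    (w : H) (hw : A w = z 0 - z k) (hwnorm : ‖w‖ ^ 2 ≤ Wp)
    (φp ψ : WithLp 2 (EuclideanSpace ℂ (Fin (m + 1)) × H))
    (hφp : φp = (WithLp.equiv 2 (EuclideanSpace ℂ (Fin (m + 1)) × H)).symm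
      ((((Real.sqrt 2)⁻¹ : ℝ) : ℂ) •
        (EuclideanSpace.single 0 1 + EuclideanSpace.single k 1), 0))
    (hψ : ψ = φp - ((ε / Real.sqrt Wp : ℝ) : ℂ) •
      (WithLp.equiv 2 (EuclideanSpace ℂ (Fin (m + 1)) × H)).symm (0, w)) :
    M ψ = 0 ∧ (1 - ε ^ 2) * ‖ψ‖ ^ 2 ≤ ‖⟪φp, ψ⟫_ℂ‖ ^ 2 := by
  have h2 : Real.sqrt 2 ≠ 0 := by positivity
  have hWs : Real.sqrt Wp ≠ 0 := by positivity
  have hk' : (0 : Fin (m + 1)) ≠ k := Ne.symm hk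
  constructor
  · rw [hψ, hφp, map_sub, map_smul, hM, hM]
    have hc0 : ((((Real.sqrt 2)⁻¹ : ℝ) : ℂ) •
        (EuclideanSpace.single 0 1 + EuclideanSpace.single k 1) :
        EuclideanSpace ℂ (Fin (m + 1))) 0 = (((Real.sqrt 2)⁻¹ : ℝ) : ℂ) := by
      simp [EuclideanSpace.single_apply, hk']
    have hsum : ∑ α ∈ Finset.univ.filter (fun α : Fin (m + 1) => α ≠ 0),
        ((((Real.sqrt 2)⁻¹ : ℝ) : ℂ) •
          (EuclideanSpace.single 0 1 + EuclideanSpace.single k 1) :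
          EuclideanSpace ℂ (Fin (m + 1))) α • z α
        = (((Real.sqrt 2)⁻¹ : ℝ) : ℂ) • z k := by
      rw [Finset.sum_eq_single_of_mem k (by simp [hk])]
      · simp [EuclideanSpace.single_apply, hk]
      · intro b hb hbk
        have hb0 : b ≠ 0 := (Finset.mem_filter.mp hb).2
        simp [EuclideanSpace.single_apply, hb0, hbk]
    rw [hc0, hsum, hw]
    have hz : ∑ α ∈ Finset.univ.filter (fun α : Fin (m + 1) => α ≠ 0),
        (0 : EuclideanSpace ℂ (Fin (m + 1))) α • z α = 0 := by simp
    rw [hz]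
    have h00 : ((0 : EuclideanSpace ℂ (Fin (m + 1))) 0) = 0 := rfl
    rw [h00]
    simp only [map_zero, add_zero, zero_smul, sub_zero, smul_zero, zero_add]
    rw [← smul_sub, smul_smul, ← sub_smul]
    convert zero_smul ℂ _
    have h2c : ((Real.sqrt 2 : ℝ) : ℂ) ≠ 0 := by exact_mod_cast h2
    have hWsc : ((Real.sqrt Wp : ℝ) : ℂ) ≠ 0 := by exact_mod_cast hWs
    push_cast
    field_simp
    ring
  · have hfst : (((WithLp.equiv 2 (EuclideanSpace ℂ (Fin (m + 1)) × H)).symm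
        ((((Real.sqrt 2)⁻¹ : ℝ) : ℂ) •
          (EuclideanSpace.single 0 1 + EuclideanSpace.single k 1), 0))) =
        ((WithLp.equiv 2 (EuclideanSpace ℂ (Fin (m + 1)) × H)).symm
        ((((Real.sqrt 2)⁻¹ : ℝ) : ℂ) •
          (EuclideanSpace.single 0 1 + EuclideanSpace.single k 1), 0)) := rfl
    have hφφ : ⟪φp, φp⟫_ℂ = 1 := by
      rw [hφp]
      rw [WithLp.prod_inner_apply]
      simp only [WithLp.equiv_symm_apply, WithLp.ofLp_toLp, inner_zero_right, add_zero]
      rw [inner_smul_left, inner_smul_right]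
      simp only [inner_add_left, inner_add_right, EuclideanSpace.inner_single_left,
        EuclideanSpace.single_apply, hk', hk, map_one, one_mul, if_neg, if_pos]
      rw [Complex.conj_ofReal]
      push_cast
      have h2c : ((Real.sqrt 2 : ℝ) : ℂ) ≠ 0 := by exact_mod_cast h2
      have hm2 : ((Real.sqrt 2 : ℝ) : ℂ) * ((Real.sqrt 2 : ℝ) : ℂ) = 2 := by
        norm_cast
        exact Real.mul_self_sqrt (by norm_num)
      field_simp
      linear_combination (-1 : ℂ) * hm2
    have hφv : ⟪φp, ((WithLp.equiv 2 (EuclideanSpace ℂ (Fin (m + 1)) × H)).symm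
        ((0 : EuclideanSpace ℂ (Fin (m + 1))), w))⟫_ℂ = 0 := by
      rw [hφp, WithLp.prod_inner_apply]
      simp
    have hvv : ⟪((WithLp.equiv 2 (EuclideanSpace ℂ (Fin (m + 1)) × H)).symm
        ((0 : EuclideanSpace ℂ (Fin (m + 1))), w)),
        ((WithLp.equiv 2 (EuclideanSpace ℂ (Fin (m + 1)) × H)).symm
        ((0 : EuclideanSpace ℂ (Fin (m + 1))), w))⟫_ℂ = (‖w‖ ^ 2 : ℝ) := by
      rw [WithLp.prod_inner_apply]
      simp [inner_self_eq_norm_sq_to_K]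
    have hi : ⟪φp, ψ⟫_ℂ = 1 := by
      rw [hψ, inner_sub_right, inner_smul_right, hφv, hφφ]
      simp
    have hvφ : ⟪((WithLp.equiv 2 (EuclideanSpace ℂ (Fin (m + 1)) × H)).symm
        ((0 : EuclideanSpace ℂ (Fin (m + 1))), w)), φp⟫_ℂ = 0 := by
      rw [← inner_conj_symm, hφv, map_zero]
    have hns : (‖ψ‖ ^ 2 : ℝ) = 1 + (ε / Real.sqrt Wp) ^ 2 * ‖w‖ ^ 2 := by
      have : ⟪ψ, ψ⟫_ℂ = ((1 + (ε / Real.sqrt Wp) ^ 2 * ‖w‖ ^ 2 : ℝ) : ℂ) := by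
        rw [hψ]
        rw [inner_sub_left, inner_sub_right, inner_sub_right, inner_smul_left,
          inner_smul_right, inner_smul_left, inner_smul_right, hφφ, hφv, hvφ, hvv]
        rw [Complex.conj_ofReal]
        push_cast
        ring
      have h' : RCLike.re ⟪ψ, ψ⟫_ℂ =
          RCLike.re (((1 + (ε / Real.sqrt Wp) ^ 2 * ‖w‖ ^ 2 : ℝ) : ℂ)) := by rw [this]
      rw [inner_self_eq_norm_sq, RCLike.re_to_complex, Complex.ofReal_re] at h'
      exact h'
    rw [hi, hns]
    simp only [norm_one, one_pow]
    have hsq : (ε / Real.sqrt Wp) ^ 2 * ‖w‖ ^ 2 ≤ ε ^ 2 := by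
      rw [div_pow, Real.sq_sqrt hWp.le]
      rw [div_mul_eq_mul_div, div_le_iff₀ hWp]
      nlinarith [sq_nonneg ε]
    nlinarith [hsq, mul_nonneg (sq_nonneg ε) (mul_nonneg (sq_nonneg (ε / Real.sqrt Wp)) (sq_nonneg ‖w‖))]

end
end

section
/- Suppose w ∈ H satisfies A w = z₀ − z_k and ‖w‖² ≤ W⁺, set ψ := φ₊ − (ε/√W⁺)·(0, w), and let Π be an orthogonal projection on ℂ^{m+1} ⊕ H with Π ψ = ψ. Let Λ be the orthogonal projection onto ker M, let U = (2Π − I)(2Λ − I), and let P₀ be the orthogonal projection onto the fixed space {u : U u = u} of U. Then ‖P₀ φ₊‖² ≥ 1 − ε². -/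
set_option maxHeartbeats 1000000


open scoped InnerProductSpace

noncomputable section

/-- If `w` is a positive witness (`A w = z₀ − z_k`, `‖w‖² ≤ W⁺`), `ψ := φ₊ − (ε/√W⁺)(0,w)`,
`Π` is an orthogonal projection with `Π ψ = ψ`, `Λ` is the orthogonal projection onto `ker M`,
`U = (2Π − I)(2Λ − I)`, and `P₀` is the orthogonal projection onto the fixed space of `U`,
then `‖P₀ φ₊‖² ≥ 1 − ε²`. -/
theorem fixed_space_overlap
    {V H : Type*}
    [NormedAddCommGroup V] [InnerProductSpace ℂ V] [FiniteDimensional ℂ V]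
    [NormedAddCommGroup H] [InnerProductSpace ℂ H] [FiniteDimensional ℂ H]
    (A : H →ₗ[ℂ] V) (ε Wp : ℝ) (hε : 0 < ε) (hWp : 0 < Wp)
    (m : ℕ) (hm : 1 ≤ m) (k : Fin (m + 1)) (hk : k ≠ 0)
    (z : Fin (m + 1) → V)
    (M : WithLp 2 (EuclideanSpace ℂ (Fin (m + 1)) × H) →ₗ[ℂ] V)
    (hM : ∀ (c : EuclideanSpace ℂ (Fin (m + 1))) (h : H),
      M ((WithLp.equiv 2 (EuclideanSpace ℂ (Fin (m + 1)) × H)).symm (c, h)) =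
        ((Real.sqrt 2 * ε / Real.sqrt Wp : ℝ) : ℂ) •
          (c 0 • z 0 - ∑ α ∈ Finset.univ.filter (fun α : Fin (m + 1) => α ≠ 0), c α • z α)
        + A h)
    (w : H) (hw : A w = z 0 - z k) (hwnorm : ‖w‖ ^ 2 ≤ Wp)
    (φp ψ : WithLp 2 (EuclideanSpace ℂ (Fin (m + 1)) × H))
    (hφp : φp = (WithLp.equiv 2 (EuclideanSpace ℂ (Fin (m + 1)) × H)).symm
      ((((Real.sqrt 2)⁻¹ : ℝ) : ℂ) •
        (EuclideanSpace.single 0 1 + EuclideanSpace.single k 1), 0))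
    (hψ : ψ = φp - ((ε / Real.sqrt Wp : ℝ) : ℂ) •
      (WithLp.equiv 2 (EuclideanSpace ℂ (Fin (m + 1)) × H)).symm (0, w))
    (Pi Lam U P0 : WithLp 2 (EuclideanSpace ℂ (Fin (m + 1)) × H) →ₗ[ℂ]
      WithLp 2 (EuclideanSpace ℂ (Fin (m + 1)) × H))
    (hPi : IsOrthProj Pi) (hPiψ : Pi ψ = ψ)
    (hLam : IsOrthProj Lam) (hLamrange : LinearMap.range Lam = LinearMap.ker M)
    (hU : U = (2 • Pi - LinearMap.id) ∘ₗ (2 • Lam - LinearMap.id))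
    (hP0 : IsOrthProj P0)
    (hP0range : LinearMap.range P0 = LinearMap.ker (U - LinearMap.id)) :
    1 - ε ^ 2 ≤ ‖P0 φp‖ ^ 2 := by
  have hsqrtWp : (0 : ℝ) < Real.sqrt Wp := Real.sqrt_pos.mpr hWp
  have hsqrt2 : (0 : ℝ) < Real.sqrt 2 := by positivity
  set r : ℂ := ((ε / Real.sqrt Wp : ℝ) : ℂ) with hr
  set δ : WithLp 2 (EuclideanSpace ℂ (Fin (m + 1)) × H) :=
    r • (WithLp.equiv 2 (EuclideanSpace ℂ (Fin (m + 1)) × H)).symm (0, w) with hδ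
  set c0 : EuclideanSpace ℂ (Fin (m + 1)) :=
    EuclideanSpace.single 0 1 + EuclideanSpace.single k 1 with hc0
  set s : ℂ := (((Real.sqrt 2)⁻¹ : ℝ) : ℂ) with hs
  -- M φp
  have hMφp : M φp = r • (z 0 - z k) := by
    rw [hφp, hM]
    have h1 : (s • c0) 0 = s := by
      simp [hc0, EuclideanSpace.single_apply, hk.symm]
    have h2 : ∑ α ∈ Finset.univ.filter (fun α : Fin (m + 1) => α ≠ 0),
        (s • c0) α • z α = s • z k := by
      rw [Finset.sum_eq_single_of_mem k (by simp [hk])]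
      · simp [hc0, EuclideanSpace.single_apply, hk]
      · intro b hb hbk
        have hb0 : b ≠ 0 := by simpa using (Finset.mem_filter.mp hb).2
        simp [hc0, EuclideanSpace.single_apply, hb0, hbk]
    have hcs : ((Real.sqrt 2 * ε / Real.sqrt Wp : ℝ) : ℂ) * s = r := by
      rw [hs, hr, ← Complex.ofReal_mul]
      congr 1
      field_simp
    rw [h1, h2, map_zero, add_zero, ← smul_sub, smul_smul, hcs]
  have hMδ : M δ = r • (z 0 - z k) := by
    rw [hδ, map_smul, hM]
    simp [hw]
  -- ψ ∈ ker M
  have hMψ : M ψ = 0 := by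
    rw [hψ, map_sub, hMφp, hMδ, sub_self]
  -- Λ ψ = ψ
  have hLamψ : Lam ψ = ψ := by
    have hmem : ψ ∈ LinearMap.range Lam := by
      rw [hLamrange]; exact hMψ
    obtain ⟨x, hx⟩ := hmem
    calc Lam ψ = Lam (Lam x) := by rw [hx]
      _ = (Lam ∘ₗ Lam) x := rfl
      _ = Lam x := by rw [hLam.1]
      _ = ψ := hx
  -- U ψ = ψ
  have hUψ : U ψ = ψ := by
    have h2ψ : (2 : ℕ) • ψ - ψ = ψ := by
      rw [two_smul]; abel
    simp only [hU, LinearMap.comp_apply, LinearMap.sub_apply, LinearMap.smul_apply,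
      LinearMap.id_apply, hLamψ]
    rw [h2ψ, hPiψ]
    exact h2ψ
  -- P0 ψ = ψ
  have hP0ψ : P0 ψ = ψ := by
    have hmem : ψ ∈ LinearMap.range P0 := by
      rw [hP0range]
      simp [LinearMap.mem_ker, LinearMap.sub_apply, hUψ]
    obtain ⟨x, hx⟩ := hmem
    calc P0 ψ = P0 (P0 x) := by rw [hx]
      _ = (P0 ∘ₗ P0) x := rfl
      _ = P0 x := by rw [hP0.1]
      _ = ψ := hx
  -- inner products
  have hφpφp : ⟪φp, φp⟫_ℂ = 1 := by
    rw [hφp, WithLp.prod_inner_apply]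
    simp only [WithLp.equiv_symm_apply, WithLp.toLp_fst, WithLp.toLp_snd, inner_zero_right, add_zero]
    rw [inner_smul_left, inner_smul_right]
    have hcc : ⟪c0, c0⟫_ℂ = 2 := by
      simp only [hc0, inner_add_left, inner_add_right, EuclideanSpace.inner_single_left,
        EuclideanSpace.single_apply]
      simp [hk, hk.symm]
      norm_num
    rw [hcc, hs, Complex.conj_ofReal, ← mul_assoc, ← Complex.ofReal_mul]
    have h12 : ((Real.sqrt 2)⁻¹ * (Real.sqrt 2)⁻¹ : ℝ) = 1 / 2 := by
      rw [← mul_inv, ← Real.sqrt_mul_self (by norm_num : (0:ℝ) ≤ 2)]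
      norm_num
    rw [h12]
    norm_num
  have hφpδ : ⟪φp, δ⟫_ℂ = 0 := by
    rw [hφp, hδ, inner_smul_right, WithLp.prod_inner_apply]
    simp [WithLp.equiv_symm_apply, WithLp.toLp_fst, WithLp.toLp_snd]
  have hδφp : ⟪δ, φp⟫_ℂ = 0 := by
    rw [← inner_conj_symm, hφpδ, map_zero]
  have hψφp : ⟪ψ, φp⟫_ℂ = 1 := by
    rw [hψ, inner_sub_left, hφpφp, hδφp, sub_zero]
  -- norms
  have hφpnorm : ‖φp‖ ^ 2 = 1 := by
    have h1 := inner_self_eq_norm_sq_to_K (𝕜 := ℂ) φp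
    rw [hφpφp] at h1
    have h2 : ((‖φp‖ ^ 2 : ℝ) : ℂ) = 1 := by push_cast; exact h1.symm
    exact Complex.ofReal_eq_one.mp h2
  have hδnorm : ‖δ‖ ^ 2 = (ε / Real.sqrt Wp) ^ 2 * ‖w‖ ^ 2 := by
    rw [hδ, norm_smul]
    have h0w : ‖(WithLp.equiv 2 (EuclideanSpace ℂ (Fin (m + 1)) × H)).symm
        ((0 : EuclideanSpace ℂ (Fin (m + 1))), w)‖ ^ 2 = ‖w‖ ^ 2 := by
      have h1 := inner_self_eq_norm_sq_to_K (𝕜 := ℂ)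
        ((WithLp.equiv 2 (EuclideanSpace ℂ (Fin (m + 1)) × H)).symm (0, w))
      rw [WithLp.prod_inner_apply] at h1
      simp only [WithLp.equiv_symm_apply, WithLp.toLp_fst, WithLp.toLp_snd, inner_zero_left, zero_add] at h1
      rw [inner_self_eq_norm_sq_to_K (𝕜 := ℂ) w] at h1
      have h2 : ((‖(WithLp.equiv 2 (EuclideanSpace ℂ (Fin (m + 1)) × H)).symm
          ((0 : EuclideanSpace ℂ (Fin (m + 1))), w)‖ ^ 2 : ℝ) : ℂ) = ((‖w‖ ^ 2 : ℝ) : ℂ) := by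
        push_cast; exact h1.symm
      exact Complex.ofReal_inj.mp h2
    rw [mul_pow, h0w]
    congr 1
    rw [hr, Complex.norm_real, Real.norm_eq_abs, sq_abs]
  have hψnorm : ‖ψ‖ ^ 2 = 1 + ‖δ‖ ^ 2 := by
    rw [hψ, norm_sub_sq (𝕜 := ℂ) φp δ, hφpδ, hφpnorm]
    simp
  -- t² ≤ ε²
  have hδle : ‖δ‖ ^ 2 ≤ ε ^ 2 := by
    rw [hδnorm, div_pow, Real.sq_sqrt hWp.le, div_mul_eq_mul_div, div_le_iff₀ hWp]
    exact mul_le_mul_of_nonneg_left hwnorm (by positivity)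
  -- Cauchy-Schwarz
  have hinner : ⟪ψ, P0 φp⟫_ℂ = 1 := by
    rw [← hP0.2 ψ φp, hP0ψ, hψφp]
  have hCS : (1 : ℝ) ≤ ‖ψ‖ * ‖P0 φp‖ := by
    have h2 := norm_inner_le_norm (𝕜 := ℂ) ψ (P0 φp)
    rw [hinner] at h2
    simpa using h2
  have hsq : (1 : ℝ) ≤ ‖ψ‖ ^ 2 * ‖P0 φp‖ ^ 2 := by
    nlinarith [hCS, norm_nonneg ψ, norm_nonneg (P0 φp), sq_nonneg (‖ψ‖ * ‖P0 φp‖ - 1)]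
  have hδ0 : (0 : ℝ) ≤ ‖δ‖ ^ 2 := sq_nonneg _
  have hP00 : (0 : ℝ) ≤ ‖P0 φp‖ ^ 2 := sq_nonneg _
  rw [hψnorm] at hsq
  nlinarith [hsq, hδle, hδ0, hP00, mul_nonneg hδ0 (sq_nonneg ε)]

end
end

section
/- Suppose w̄ ∈ V satisfies: the inner product of w̄ with z₀ equals 1, and the inner product of w̄ with z_α equals 1 if α = k and 0 otherwise (for α = 1, …, m). Set ψ̄ := ((e₀ − e_k)/√2, (√W⁺/(2ε))·A†w̄) ∈ ℂ^{m+1} ⊕ H, where A† is the adjoint of A. Then ψ̄ is orthogonal to ker M. -/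
open scoped InnerProductSpace

noncomputable section

/-- If `w̄` is a negative witness, i.e. `⟨w̄, z₀⟩ = 1` and `⟨w̄, z_α⟩ = δ_{kα}` for
`α = 1, …, m`, then `ψ̄ := ((e₀ − e_k)/√2, (√W⁺/(2ε))·A†w̄)` is orthogonal to `ker M`. -/
theorem negative_witness_orthogonal_kernel
    {V H : Type*}
    [NormedAddCommGroup V] [InnerProductSpace ℂ V] [FiniteDimensional ℂ V]
    [NormedAddCommGroup H] [InnerProductSpace ℂ H] [FiniteDimensional ℂ H]
    (A : H →ₗ[ℂ] V) (ε Wp : ℝ) (hε : 0 < ε) (hWp : 0 < Wp)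
    (m : ℕ) (hm : 1 ≤ m) (k : Fin (m + 1)) (hk : k ≠ 0)
    (z : Fin (m + 1) → V)
    (M : WithLp 2 (EuclideanSpace ℂ (Fin (m + 1)) × H) →ₗ[ℂ] V)
    (hM : ∀ (c : EuclideanSpace ℂ (Fin (m + 1))) (h : H),
      M ((WithLp.equiv 2 (EuclideanSpace ℂ (Fin (m + 1)) × H)).symm (c, h)) =
        ((Real.sqrt 2 * ε / Real.sqrt Wp : ℝ) : ℂ) •
          (c 0 • z 0 - ∑ α ∈ Finset.univ.filter (fun α : Fin (m + 1) => α ≠ 0), c α • z α)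
        + A h)
    (wbar : V) (hwbar0 : ⟪wbar, z 0⟫_ℂ = 1)
    (hwbar : ∀ α : Fin (m + 1), α ≠ 0 → ⟪wbar, z α⟫_ℂ = if α = k then 1 else 0)
    (ψbar : WithLp 2 (EuclideanSpace ℂ (Fin (m + 1)) × H))
    (hψbar : ψbar = (WithLp.equiv 2 (EuclideanSpace ℂ (Fin (m + 1)) × H)).symm
      ((((Real.sqrt 2)⁻¹ : ℝ) : ℂ) •
        (EuclideanSpace.single 0 1 - EuclideanSpace.single k 1),
       ((Real.sqrt Wp / (2 * ε) : ℝ) : ℂ) • LinearMap.adjoint A wbar)) :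
    ∀ v ∈ LinearMap.ker M, ⟪ψbar, v⟫_ℂ = 0 := by
  intro v hv
  have hv0 : M v = 0 := hv
  set c : EuclideanSpace ℂ (Fin (m + 1)) := v.fst with hc
  set h : H := v.snd with hh
  have hveq : v = (WithLp.equiv 2 (EuclideanSpace ℂ (Fin (m + 1)) × H)).symm (c, h) := rfl
  rw [hveq, hM] at hv0
  -- value of A h
  have hAh : (A h : V) = -(((Real.sqrt 2 * ε / Real.sqrt Wp : ℝ) : ℂ) •
      (c 0 • z 0 - ∑ α ∈ Finset.univ.filter (fun α : Fin (m + 1) => α ≠ 0), c α • z α)) := by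
    linear_combination (norm := module) hv0
  -- sum value
  have hsum : ⟪wbar, (∑ α ∈ Finset.univ.filter (fun α : Fin (m + 1) => α ≠ 0), c α • z α)⟫_ℂ
      = c k := by
    rw [inner_sum]
    rw [Finset.sum_eq_single k]
    · rw [inner_smul_right, hwbar k hk, if_pos rfl, mul_one]
    · intro b hb hbk
      rw [inner_smul_right, hwbar b (Finset.mem_filter.mp hb).2, if_neg hbk, mul_zero]
    · intro hkk
      exact absurd (Finset.mem_filter.mpr ⟨Finset.mem_univ k, hk⟩) hkk
  have hwAh : ⟪wbar, A h⟫_ℂ = -(((Real.sqrt 2 * ε / Real.sqrt Wp : ℝ) : ℂ) * (c 0 - c k)) := by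
    rw [hAh, inner_neg_right, inner_smul_right, inner_sub_right, inner_smul_right, hwbar0, hsum]
    ring
  rw [hψbar, WithLp.prod_inner_apply]
  simp only [WithLp.equiv_symm_apply, WithLp.ofLp_toLp, WithLp.ofLp_fst, WithLp.ofLp_snd]
  rw [inner_smul_left, inner_sub_left, EuclideanSpace.inner_single_left,
    EuclideanSpace.inner_single_left, inner_smul_left, LinearMap.adjoint_inner_left, hwAh]
  simp only [map_one, one_mul, Complex.conj_ofReal]
  have h2r : (Real.sqrt Wp / (2 * ε)) * (Real.sqrt 2 * ε / Real.sqrt Wp) = (Real.sqrt 2)⁻¹ := by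
    have h2' : Real.sqrt 2 * Real.sqrt 2 = 2 := Real.mul_self_sqrt (by norm_num)
    have hs2 : Real.sqrt 2 ≠ 0 := by positivity
    rw [div_mul_div_comm, div_eq_iff (by positivity), inv_mul_eq_div, eq_div_iff hs2]
    linear_combination ε * Real.sqrt Wp * h2'
  have h2 : ((Real.sqrt Wp / (2 * ε) : ℝ) : ℂ) * ((Real.sqrt 2 * ε / Real.sqrt Wp : ℝ) : ℂ)
      = (((Real.sqrt 2)⁻¹ : ℝ) : ℂ) := by
    rw [← Complex.ofReal_mul, h2r]
  linear_combination (c k - c 0) * h2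

end
end

section
/- Suppose w̄ ∈ V satisfies: the inner product of w̄ with z₀ equals 1, and the inner product of w̄ with z_α equals 1 if α = k and 0 otherwise (for α = 1, …, m). Set ψ̄ := ((e₀ − e_k)/√2, (√W⁺/(2ε))·A†w̄). Let H₀ ⊆ H be a subspace with A†w̄ orthogonal to H₀, and let Π be the orthogonal projection on ℂ^{m+1} ⊕ H acting as the identity on the ℂ^{m+1} summand and as the orthogonal projection onto H₀ on the H summand. Let Λ be the orthogonal projection onto ker M, U = (2Π − I)(2Λ − I), and for Θ ∈ [0, π] let P_Θ be the orthogonal projection onto the span of all eigenvectors of U with eigenvalue e^{iθ}, θ ∈ (−π, π], |θ| ≤ Θ. If W⁻ ≥ ‖A†w̄‖² and W := √(W⁺·W⁻), then Π ψ̄ = φ₋ and ‖P_Θ φ₋‖² ≤ (Θ²/4)·(1 + W²/(4ε²)). -/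
open scoped InnerProductSpace

noncomputable section

section Aux


lemma abs_one_sub_exp_le (θ : ℝ) : ‖1 - Complex.exp (θ * Complex.I)‖ ≤ |θ| := by
  have h : Complex.exp (θ * Complex.I) = Complex.ofReal (Real.cos θ) + Complex.ofReal (Real.sin θ) * Complex.I := by
    rw [Complex.exp_mul_I]; push_cast; ring
  have hns : Complex.normSq (1 - Complex.exp (θ * Complex.I)) = 2 - 2 * Real.cos θ := by
    rw [h]
    rw [show (1 : ℂ) - (Complex.ofReal (Real.cos θ) + Complex.ofReal (Real.sin θ) * Complex.I)
        = Complex.mk (1 - Real.cos θ) (-Real.sin θ) by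
      apply Complex.ext <;> simp [← Complex.ofReal_cos, ← Complex.ofReal_sin]]
    rw [Complex.normSq_mk]
    nlinarith [Real.sin_sq_add_cos_sq θ]
  have hcos : 1 - θ ^ 2 / 2 ≤ Real.cos θ := Real.one_sub_sq_div_two_le_cos
  have h1 : ‖1 - Complex.exp (θ * Complex.I)‖ ^ 2 ≤ |θ| ^ 2 := by
    rw [Complex.sq_norm, hns]
    nlinarith [sq_abs θ]
  have := norm_nonneg (1 - Complex.exp (θ * Complex.I))
  nlinarith [abs_nonneg θ]

lemma conj_exp_mul_I (θ : ℝ) :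
    (starRingEnd ℂ) (Complex.exp (θ * Complex.I)) = Complex.exp (-(θ * Complex.I)) := by
  rw [← Complex.exp_conj]
  congr 1
  simp [Complex.conj_I]

lemma conj_exp_mul_exp (θ : ℝ) :
    (starRingEnd ℂ) (Complex.exp (θ * Complex.I)) * Complex.exp (θ * Complex.I) = 1 := by
  rw [conj_exp_mul_I, ← Complex.exp_add]; simp

variable {E : Type*} [NormedAddCommGroup E] [InnerProductSpace ℂ E]

lemma IsOrthProj.idem {P : E →ₗ[ℂ] E} (hP : IsOrthProj P) (x : E) : P (P x) = P x := by
  conv_rhs => rw [← hP.1]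
  rfl

lemma refl_inner {P : E →ₗ[ℂ] E} (hP : IsOrthProj P) (x y : E) :
    ⟪2 • P x - x, 2 • P y - y⟫_ℂ = ⟪x, y⟫_ℂ := by
  have h1 : ⟪P x, P y⟫_ℂ = ⟪x, P y⟫_ℂ := by rw [hP.2, hP.idem]
  have h2 : ⟪P x, y⟫_ℂ = ⟪x, P y⟫_ℂ := hP.2 x y
  rw [two_smul, two_smul]
  rw [inner_sub_left, inner_sub_right, inner_sub_right, inner_add_left, inner_add_left,
    inner_add_right, inner_add_right, h1, h2]
  ring

lemma eig_inner {Pi Lam U : E →ₗ[ℂ] E}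
    (hPi : IsOrthProj Pi) (hLam : IsOrthProj Lam)
    (hU : U = (2 • Pi - LinearMap.id) ∘ₗ (2 • Lam - LinearMap.id))
    {ψ : E} (hψ : Lam ψ = 0)
    (θ : ℝ) {u : E} (hu : U u = Complex.exp (θ * Complex.I) • u) :
    ⟪u, Pi ψ⟫_ℂ = ((1 - Complex.exp (θ * Complex.I)) / 2) * ⟪u, ψ⟫_ℂ := by
  set μ := Complex.exp (θ * Complex.I) with hμ
  set y := 2 • Lam u - u with hy
  have hUu' : U u = 2 • Pi y - y := by rw [hU]; rfl
  have hUu : Pi y + Pi y - y = μ • u := by rw [← hu, hUu', two_smul]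
  have hPiy : Pi y = μ • Pi u := by
    have h0 := congrArg Pi hUu
    rw [map_sub, map_add, hPi.idem, map_smul] at h0
    have h2 : Pi y + Pi y - Pi y = Pi y := by abel
    rw [h2] at h0
    exact h0
  have hyeq : y = μ • (Pi u + Pi u - u) := by
    rw [smul_sub, smul_add, ← hPiy, ← hUu]
    abel
  have hLamu : ⟪Lam u, ψ⟫_ℂ = 0 := by rw [hLam.2, hψ, inner_zero_right]
  have hy1 : ⟪y, ψ⟫_ℂ = -⟪u, ψ⟫_ℂ := by
    rw [hy, two_smul, inner_sub_left, inner_add_left, hLamu]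
    ring
  have hy2 : ⟪y, ψ⟫_ℂ = (starRingEnd ℂ μ) * (2 * ⟪u, Pi ψ⟫_ℂ - ⟪u, ψ⟫_ℂ) := by
    rw [hyeq, inner_smul_left, inner_sub_left, inner_add_left, hPi.2]
    ring
  have hconj : (starRingEnd ℂ μ) * μ = 1 := by
    rw [hμ, ← Complex.exp_conj]
    rw [show (starRingEnd ℂ) ((θ : ℂ) * Complex.I) = -((θ:ℂ) * Complex.I) by
      simp [Complex.conj_I]]
    rw [← Complex.exp_add]; simp
  have key : -⟪u, ψ⟫_ℂ = (starRingEnd ℂ μ) * (2 * ⟪u, Pi ψ⟫_ℂ - ⟪u, ψ⟫_ℂ) := by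
    rw [← hy1, hy2]
  linear_combination (-μ/2) * key + (-(2 * ⟪u, Pi ψ⟫_ℂ - ⟪u, ψ⟫_ℂ)/2) * hconj

lemma U_inner {Pi Lam U : E →ₗ[ℂ] E}
    (hPi : IsOrthProj Pi) (hLam : IsOrthProj Lam)
    (hU : U = (2 • Pi - LinearMap.id) ∘ₗ (2 • Lam - LinearMap.id))
    (x y : E) : ⟪U x, U y⟫_ℂ = ⟪x, y⟫_ℂ := by
  have hx : U x = 2 • Pi (2 • Lam x - x) - (2 • Lam x - x) := by rw [hU]; rfl
  have hy : U y = 2 • Pi (2 • Lam y - y) - (2 • Lam y - y) := by rw [hU]; rfl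
  rw [hx, hy, refl_inner hPi, refl_inner hLam]

lemma norm_sum_sq_of_orthogonal {ι : Type*} (s : Finset ι) (g : ι → E)
    (h : ∀ i ∈ s, ∀ j ∈ s, i ≠ j → ⟪g i, g j⟫_ℂ = 0) :
    ‖∑ i ∈ s, g i‖ ^ 2 = ∑ i ∈ s, ‖g i‖ ^ 2 := by
  have key : ⟪∑ i ∈ s, g i, ∑ j ∈ s, g j⟫_ℂ = ∑ i ∈ s, ⟪g i, g i⟫_ℂ := by
    rw [sum_inner]
    refine Finset.sum_congr rfl fun i hi => ?_
    rw [inner_sum, Finset.sum_eq_single_of_mem i hi]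
    intro j hj hji
    exact h i hi j hj (Ne.symm hji)
  simp only [inner_self_eq_norm_sq_to_K] at key
  exact_mod_cast key

lemma esg {Pi Lam U PΘ : E →ₗ[ℂ] E}
    (hPi : IsOrthProj Pi) (hLam : IsOrthProj Lam)
    (hU : U = (2 • Pi - LinearMap.id) ∘ₗ (2 • Lam - LinearMap.id))
    (Θ : ℝ) (hΘ0 : 0 ≤ Θ)
    (hPΘ : IsOrthProj PΘ)
    (hPΘrange : LinearMap.range PΘ = Submodule.span ℂ
      {u : E | ∃ θ : ℝ, θ ∈ Set.Ioc (-Real.pi) Real.pi ∧ |θ| ≤ Θ ∧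
        U u = Complex.exp (θ * Complex.I) • u})
    {ψ : E} (hψ : Lam ψ = 0) :
    ‖PΘ (Pi ψ)‖ ≤ (Θ / 2) * ‖ψ‖ := by
  classical
  set v := PΘ (Pi ψ) with hv
  have hvmem : v ∈ Submodule.span ℂ
      {u : E | ∃ θ : ℝ, θ ∈ Set.Ioc (-Real.pi) Real.pi ∧ |θ| ≤ Θ ∧
        U u = Complex.exp (θ * Complex.I) • u} := by
    rw [← hPΘrange]
    exact LinearMap.mem_range_self PΘ (Pi ψ)
  set T := {θ : ℝ // θ ∈ Set.Ioc (-Real.pi) Real.pi ∧ |θ| ≤ Θ} with hT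
  set p : T → Submodule ℂ E :=
    fun θ => Module.End.eigenspace U (Complex.exp (θ.1 * Complex.I)) with hp
  have hspan : Submodule.span ℂ
      {u : E | ∃ θ : ℝ, θ ∈ Set.Ioc (-Real.pi) Real.pi ∧ |θ| ≤ Θ ∧
        U u = Complex.exp (θ * Complex.I) • u} ≤ ⨆ θ : T, p θ := by
    rw [Submodule.span_le]
    rintro u ⟨θ, h1, h2, h3⟩
    exact Submodule.mem_iSup_of_mem ⟨θ, h1, h2⟩ (Module.End.mem_eigenspace_iff.mpr h3)
  obtain ⟨f, hf, hsum⟩ := (Submodule.mem_iSup_iff_exists_finsupp p v).mp (hspan hvmem)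
  have heig : ∀ θ : T, U (f θ) = Complex.exp (θ.1 * Complex.I) • f θ :=
    fun θ => Module.End.mem_eigenspace_iff.mp (hf θ)
  -- orthogonality
  have horth : ∀ θ₁ θ₂ : T, θ₁ ≠ θ₂ → ⟪f θ₁, f θ₂⟫_ℂ = 0 := by
    intro θ₁ θ₂ hne
    by_contra ht
    have h0 := U_inner hPi hLam hU (f θ₁) (f θ₂)
    rw [heig θ₁, heig θ₂, inner_smul_left, inner_smul_right] at h0
    have h1 : (starRingEnd ℂ) (Complex.exp (θ₁.1 * Complex.I)) *
        Complex.exp (θ₂.1 * Complex.I) = 1 := by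
      have := mul_right_cancel₀ ht (by linear_combination h0 :
        ((starRingEnd ℂ) (Complex.exp (θ₁.1 * Complex.I)) *
          Complex.exp (θ₂.1 * Complex.I)) * ⟪f θ₁, f θ₂⟫_ℂ = 1 * ⟪f θ₁, f θ₂⟫_ℂ)
      exact this
    have h2 : Complex.exp (((θ₂.1 - θ₁.1 : ℝ) : ℂ) * Complex.I) = 1 := by
      rw [← Complex.exp_conj] at h1
      rw [show (starRingEnd ℂ) ((θ₁.1 : ℂ) * Complex.I) = -((θ₁.1:ℂ) * Complex.I) by
        simp [Complex.conj_I]] at h1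
      rw [← Complex.exp_add] at h1
      rw [← h1]
      congr 1
      push_cast
      ring
    obtain ⟨n, hn⟩ := Complex.exp_eq_one_iff.mp h2
    have hn' : (θ₂.1 - θ₁.1 : ℝ) = n * (2 * Real.pi) := by
      have := mul_right_cancel₀ Complex.I_ne_zero
        (by rw [hn]; ring_nf :
          ((θ₂.1 - θ₁.1 : ℝ) : ℂ) * Complex.I = ((n : ℂ) * (2 * Real.pi)) * Complex.I)
      exact_mod_cast this
    have hne' : θ₁.1 ≠ θ₂.1 := fun h => hne (Subtype.ext h)
    have hnz : n ≠ 0 := by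
      rintro rfl
      simp at hn'
      exact hne' (by linarith)
    have hπ := Real.pi_pos
    have h3 : |(n : ℝ)| ≥ 1 := by
      rw [← Int.cast_abs]
      exact_mod_cast Int.one_le_abs hnz
    have hb1 := θ₁.2.1.1; have hb2 := θ₁.2.1.2
    have hb3 := θ₂.2.1.1; have hb4 := θ₂.2.1.2
    have habs : |θ₂.1 - θ₁.1| < 2 * Real.pi := by
      rw [abs_lt]; constructor <;> linarith
    rw [hn', abs_mul] at habs
    have : |(2 : ℝ) * Real.pi| = 2 * Real.pi := abs_of_pos (by linarith)
    rw [this] at habs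
    nlinarith
  set s := f.support with hs
  have hvsum : v = ∑ θ ∈ s, f θ := by rw [← hsum]; rfl
  set c : T → ℂ := fun θ => (1 - Complex.exp (θ.1 * Complex.I)) / 2 with hc
  have hkey : ∀ θ : T, ⟪f θ, Pi ψ⟫_ℂ = c θ * ⟪f θ, ψ⟫_ℂ :=
    fun θ => eig_inner hPi hLam hU hψ θ.1 (heig θ)
  have hcb : ∀ θ : T, ‖c θ‖ ≤ Θ / 2 := by
    intro θ
    rw [hc]
    simp only [norm_div, Complex.norm_two]
    have := abs_one_sub_exp_le θ.1
    have h2 := θ.2.2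
    calc ‖1 - Complex.exp (θ.1 * Complex.I)‖ / 2 ≤ |θ.1| / 2 := by linarith
    _ ≤ Θ / 2 := by linarith
  set w := ∑ θ ∈ s, (starRingEnd ℂ) (c θ) • f θ with hw
  have hw1 : ⟪w, ψ⟫_ℂ = ∑ θ ∈ s, c θ * ⟪f θ, ψ⟫_ℂ := by
    rw [hw, sum_inner]
    refine Finset.sum_congr rfl fun θ _ => ?_
    rw [inner_smul_left, Complex.conj_conj]
  have hv1 : ((‖v‖ ^ 2 : ℝ) : ℂ) = ⟪v, Pi ψ⟫_ℂ := by
    have h1 : ⟪v, Pi ψ⟫_ℂ = ⟪PΘ v, Pi ψ⟫_ℂ := by rw [hv, hPΘ.idem]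
    rw [h1, hPΘ.2, ← hv, inner_self_eq_norm_sq_to_K]
    push_cast
    rfl
  have hv2 : ⟪v, Pi ψ⟫_ℂ = ⟪w, ψ⟫_ℂ := by
    rw [hvsum, sum_inner, hw1]
    exact Finset.sum_congr rfl fun θ _ => hkey θ
  -- Pythagoras
  have hnv : ‖v‖ ^ 2 = ∑ θ ∈ s, ‖f θ‖ ^ 2 := by
    rw [hvsum]
    exact norm_sum_sq_of_orthogonal s _ (fun i _ j _ hij => horth i j hij)
  have hnw : ‖w‖ ^ 2 ≤ (Θ / 2) ^ 2 * ‖v‖ ^ 2 := by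
    rw [hw, norm_sum_sq_of_orthogonal s _ (fun i _ j _ hij => by
      rw [inner_smul_left, inner_smul_right, horth i j hij, mul_zero, mul_zero]), hnv,
      Finset.mul_sum]
    refine Finset.sum_le_sum fun θ _ => ?_
    rw [norm_smul]
    have h1 : ‖(starRingEnd ℂ) (c θ)‖ = ‖c θ‖ := by
      rw [RCLike.norm_conj]
    rw [mul_pow, h1]
    have := hcb θ
    have h2 : (0:ℝ) ≤ ‖c θ‖ := norm_nonneg _
    nlinarith [sq_nonneg (‖f θ‖), mul_le_mul this this h2 (by linarith : (0:ℝ) ≤ Θ/2)]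
  have hfinal : ‖v‖ ^ 2 ≤ ‖w‖ * ‖ψ‖ := by
    have h1 : ‖v‖ ^ 2 = ‖((‖v‖ ^ 2 : ℝ) : ℂ)‖ := by
      rw [Complex.norm_real, Real.norm_of_nonneg (sq_nonneg _)]
    rw [h1, hv1, hv2]
    exact norm_inner_le_norm w ψ
  have hwle : ‖w‖ ≤ (Θ / 2) * ‖v‖ := by
    have h0 : (0:ℝ) ≤ (Θ / 2) * ‖v‖ := mul_nonneg (by linarith) (norm_nonneg _)
    nlinarith [norm_nonneg w]
  rcases eq_or_lt_of_le (norm_nonneg v) with h | h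
  · rw [← h]
    exact mul_nonneg (by linarith) (norm_nonneg _)
  · have : ‖v‖ ^ 2 ≤ ((Θ / 2) * ‖ψ‖) * ‖v‖ := by
      calc ‖v‖ ^ 2 ≤ ‖w‖ * ‖ψ‖ := hfinal
      _ ≤ ((Θ / 2) * ‖v‖) * ‖ψ‖ := by
          apply mul_le_mul_of_nonneg_right hwle (norm_nonneg _)
      _ = ((Θ / 2) * ‖ψ‖) * ‖v‖ := by ring
    have := le_of_mul_le_mul_right (by nlinarith : ‖v‖ * ‖v‖ ≤ ((Θ / 2) * ‖ψ‖) * ‖v‖) h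
    linarith

end Aux

set_option maxHeartbeats 1000000 in
/-- If `w̄` is a negative witness (`⟨w̄, z₀⟩ = 1`, `⟨w̄, z_α⟩ = δ_{kα}`),
`ψ̄ := ((e₀ − e_k)/√2, (√W⁺/(2ε))·A†w̄)`, `H₀ ⊆ H` is a subspace with `A†w̄ ⊥ H₀`,
`Π` acts as the identity on `ℂ^{m+1}` and as the orthogonal projection onto `H₀` on `H`,
`Λ` is the orthogonal projection onto `ker M`, `U = (2Π − I)(2Λ − I)`, and `P_Θ` is the
projection onto the span of eigenvectors of `U` with phase at most `Θ`, then `Π ψ̄ = φ₋` and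
`‖P_Θ φ₋‖² ≤ (Θ²/4)(1 + W²/(4ε²))` where `W = √(W⁺ W⁻)` and `W⁻ ≥ ‖A†w̄‖²`. -/
theorem negative_witness_small_phase_overlap
    {V H : Type*}
    [NormedAddCommGroup V] [InnerProductSpace ℂ V] [FiniteDimensional ℂ V]
    [NormedAddCommGroup H] [InnerProductSpace ℂ H] [FiniteDimensional ℂ H]
    (A : H →ₗ[ℂ] V) (ε Wp : ℝ) (hε : 0 < ε) (hWp : 0 < Wp)
    (m : ℕ) (hm : 1 ≤ m) (k : Fin (m + 1)) (hk : k ≠ 0)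
    (z : Fin (m + 1) → V)
    (M : WithLp 2 (EuclideanSpace ℂ (Fin (m + 1)) × H) →ₗ[ℂ] V)
    (hM : ∀ (c : EuclideanSpace ℂ (Fin (m + 1))) (h : H),
      M ((WithLp.equiv 2 (EuclideanSpace ℂ (Fin (m + 1)) × H)).symm (c, h)) =
        ((Real.sqrt 2 * ε / Real.sqrt Wp : ℝ) : ℂ) •
          (c 0 • z 0 - ∑ α ∈ Finset.univ.filter (fun α : Fin (m + 1) => α ≠ 0), c α • z α)
        + A h)
    (wbar : V) (hwbar0 : ⟪wbar, z 0⟫_ℂ = 1)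
    (hwbar : ∀ α : Fin (m + 1), α ≠ 0 → ⟪wbar, z α⟫_ℂ = if α = k then 1 else 0)
    (φm ψbar : WithLp 2 (EuclideanSpace ℂ (Fin (m + 1)) × H))
    (hφm : φm = (WithLp.equiv 2 (EuclideanSpace ℂ (Fin (m + 1)) × H)).symm
      ((((Real.sqrt 2)⁻¹ : ℝ) : ℂ) •
        (EuclideanSpace.single 0 1 - EuclideanSpace.single k 1), 0))
    (hψbar : ψbar = (WithLp.equiv 2 (EuclideanSpace ℂ (Fin (m + 1)) × H)).symm
      ((((Real.sqrt 2)⁻¹ : ℝ) : ℂ) •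
        (EuclideanSpace.single 0 1 - EuclideanSpace.single k 1),
       ((Real.sqrt Wp / (2 * ε) : ℝ) : ℂ) • LinearMap.adjoint A wbar))
    (H0 : Submodule ℂ H)
    (hH0 : ∀ h ∈ H0, ⟪LinearMap.adjoint A wbar, h⟫_ℂ = 0)
    (Pi Lam U PΘ : WithLp 2 (EuclideanSpace ℂ (Fin (m + 1)) × H) →ₗ[ℂ]
      WithLp 2 (EuclideanSpace ℂ (Fin (m + 1)) × H))
    (hPi : ∀ (c : EuclideanSpace ℂ (Fin (m + 1))) (h : H),
      Pi ((WithLp.equiv 2 (EuclideanSpace ℂ (Fin (m + 1)) × H)).symm (c, h)) =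
        (WithLp.equiv 2 (EuclideanSpace ℂ (Fin (m + 1)) × H)).symm
          (c, (H0.orthogonalProjection h : H)))
    (hLam : IsOrthProj Lam) (hLamrange : LinearMap.range Lam = LinearMap.ker M)
    (hU : U = (2 • Pi - LinearMap.id) ∘ₗ (2 • Lam - LinearMap.id))
    (Θ : ℝ) (hΘ : Θ ∈ Set.Icc (0 : ℝ) Real.pi)
    (hPΘ : IsOrthProj PΘ)
    (hPΘrange : LinearMap.range PΘ = Submodule.span ℂ
      {u : WithLp 2 (EuclideanSpace ℂ (Fin (m + 1)) × H) | ∃ θ : ℝ,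
        θ ∈ Set.Ioc (-Real.pi) Real.pi ∧ |θ| ≤ Θ ∧
        U u = Complex.exp (θ * Complex.I) • u})
    (Wm Wtot : ℝ) (hWm : ‖LinearMap.adjoint A wbar‖ ^ 2 ≤ Wm)
    (hWtot : Wtot = Real.sqrt (Wp * Wm)) :
    Pi ψbar = φm ∧
      ‖PΘ φm‖ ^ 2 ≤ (Θ ^ 2 / 4) * (1 + Wtot ^ 2 / (4 * ε ^ 2)) := by
  classical
  set eqv := WithLp.equiv 2 (EuclideanSpace ℂ (Fin (m + 1)) × H) with heqv
  have hΘ0 : 0 ≤ Θ := hΘ.1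
  -- A†w̄ ∈ H0ᗮ
  have hmem : LinearMap.adjoint A wbar ∈ H0ᗮ := by
    rw [Submodule.mem_orthogonal]
    intro u hu
    rw [← inner_eq_zero_symm]
    exact hH0 u hu
  have hproj0 : (H0.orthogonalProjection
      (((Real.sqrt Wp / (2 * ε) : ℝ) : ℂ) • LinearMap.adjoint A wbar) : H) = 0 := by
    rw [map_smul, Submodule.orthogonalProjectionOnto_apply_of_mem_orthogonal hmem]
    simp
  have part1 : Pi ψbar = φm := by
    rw [hψbar, hPi, hproj0, hφm]
  refine ⟨part1, ?_⟩
  -- structure of elements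
  have hxeq : ∀ x : WithLp 2 (EuclideanSpace ℂ (Fin (m + 1)) × H),
      x = eqv.symm ((eqv x).1, (eqv x).2) := by
    intro x
    rw [Prod.mk.eta, Equiv.symm_apply_apply]
  have hPi'' : ∀ x, eqv (Pi x) =
      ((eqv x).1, (H0.orthogonalProjection (eqv x).2 : H)) := by
    intro x
    conv_lhs => rw [hxeq x]
    rw [hPi, Equiv.apply_symm_apply]
  have hPifst : ∀ x, (Pi x).ofLp.1 = x.ofLp.1 := fun x => by
    have := congrArg Prod.fst (hPi'' x)
    exact this
  have hPisnd : ∀ x, (Pi x).ofLp.2 = (H0.orthogonalProjection x.ofLp.2 : H) := fun x => by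
    have := congrArg Prod.snd (hPi'' x)
    exact this
  have hPiOP : IsOrthProj Pi := by
    constructor
    · apply LinearMap.ext
      intro x
      rw [LinearMap.comp_apply]
      apply eqv.injective
      rw [hPi'' (Pi x), hPi'' x]
      simp [Submodule.starProjection_eq_self_iff]
    · intro x y
      rw [WithLp.prod_inner_apply, WithLp.prod_inner_apply, hPifst, hPisnd, hPifst, hPisnd,
        ← Submodule.starProjection_apply, ← Submodule.starProjection_apply,
        Submodule.inner_starProjection_left_eq_right]
  -- ψbar ⊥ ker M
  have hconst : ((Real.sqrt Wp / (2 * ε) : ℝ) : ℂ) * ((Real.sqrt 2 * ε / Real.sqrt Wp : ℝ) : ℂ)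
      = (((Real.sqrt 2)⁻¹ : ℝ) : ℂ) := by
    have h2 : Real.sqrt 2 * Real.sqrt 2 = 2 := Real.mul_self_sqrt (by norm_num)
    have hWp' : Real.sqrt Wp ≠ 0 := ne_of_gt (Real.sqrt_pos.mpr hWp)
    have hs2 : Real.sqrt 2 ≠ 0 := by positivity
    have hr : (Real.sqrt Wp / (2 * ε)) * (Real.sqrt 2 * ε / Real.sqrt Wp)
        = (Real.sqrt 2)⁻¹ := by
      field_simp
      linear_combination h2
    rw [← Complex.ofReal_mul, hr]
  have hperp : ∀ x, M x = 0 → ⟪ψbar, x⟫_ℂ = 0 := by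
    intro x hMx
    have hMc := hM (eqv x).1 (eqv x).2
    rw [← hxeq x, hMx] at hMc
    have hinner := congrArg (fun v => ⟪wbar, v⟫_ℂ) hMc
    simp only [inner_zero_right, inner_add_right, inner_smul_right, inner_sub_right,
      inner_sum] at hinner
    rw [hwbar0] at hinner
    have hsum : ∑ α ∈ Finset.univ.filter (fun α : Fin (m+1) => α ≠ 0),
        (eqv x).1 α * ⟪wbar, z α⟫_ℂ = (eqv x).1 k := by
      rw [Finset.sum_congr rfl (fun α hα => by
        rw [hwbar α (Finset.mem_filter.mp hα).2, mul_ite, mul_one, mul_zero])]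
      rw [Finset.sum_ite_eq' _ k]
      simp [hk]
    rw [hsum] at hinner
    conv_lhs => rw [hψbar, hxeq x]
    have eqfst : ∀ (a : EuclideanSpace ℂ (Fin (m + 1))) (b : H), (eqv.symm (a, b)).ofLp.1 = a :=
      fun _ _ => rfl
    have eqsnd : ∀ (a : EuclideanSpace ℂ (Fin (m + 1))) (b : H), (eqv.symm (a, b)).ofLp.2 = b :=
      fun _ _ => rfl
    rw [WithLp.prod_inner_apply, eqfst, eqsnd,
      eqfst, eqsnd]
    simp only [inner_smul_left, inner_sub_left, EuclideanSpace.inner_single_left,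
      Complex.conj_ofReal, map_one, one_mul, LinearMap.adjoint_inner_left]
    linear_combination (-((Real.sqrt Wp / (2 * ε) : ℝ) : ℂ)) * hinner
      - ((eqv x).1 0 - (eqv x).1 k) * hconst
  have hLamψ : Lam ψbar = 0 := by
    have hker : M (Lam ψbar) = 0 := by
      have hmem2 : Lam ψbar ∈ LinearMap.ker M := by
        rw [← hLamrange]
        exact LinearMap.mem_range_self _ _
      exact hmem2
    have h0 : ⟪ψbar, Lam ψbar⟫_ℂ = 0 := hperp _ hker
    have h1 : ⟪Lam ψbar, Lam ψbar⟫_ℂ = 0 := by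
      rw [hLam.2, hLam.idem]
      exact h0
    exact inner_self_eq_zero.mp h1
  -- norm of ψbar
  have hψnorm : ‖ψbar‖ ^ 2 = 1 + Wp / (4 * ε ^ 2) * ‖LinearMap.adjoint A wbar‖ ^ 2 := by
    have eqfst : ∀ (a : EuclideanSpace ℂ (Fin (m + 1))) (b : H), (eqv.symm (a, b)).ofLp.1 = a :=
      fun _ _ => rfl
    have eqsnd : ∀ (a : EuclideanSpace ℂ (Fin (m + 1))) (b : H), (eqv.symm (a, b)).ofLp.2 = b :=
      fun _ _ => rfl
    rw [hψbar, WithLp.prod_norm_sq_eq_of_L2, ← WithLp.ofLp_fst, ← WithLp.ofLp_snd, eqfst, eqsnd]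
    have hk' : (0 : Fin (m+1)) ≠ k := Ne.symm hk
    have hbase : ⟪(EuclideanSpace.single (0 : Fin (m+1)) (1:ℂ) - EuclideanSpace.single k 1),
        (EuclideanSpace.single (0 : Fin (m+1)) (1:ℂ) - EuclideanSpace.single k 1)⟫_ℂ = 2 := by
      simp [-inner_self_eq_norm_sq_to_K, inner_sub_left, inner_sub_right, EuclideanSpace.inner_single_left,
        EuclideanSpace.single_apply, hk, hk']
      ring
    have hbase' : ‖EuclideanSpace.single (0 : Fin (m+1)) (1:ℂ)
        - EuclideanSpace.single k 1‖ ^ 2 = 2 := by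
      have h2 := norm_sq_eq_re_inner (𝕜 := ℂ)
        (EuclideanSpace.single (0 : Fin (m+1)) (1:ℂ) - EuclideanSpace.single k 1)
      rw [hbase] at h2
      simpa using h2
    have hc : ‖(((Real.sqrt 2)⁻¹ : ℝ) : ℂ) •
        (EuclideanSpace.single (0 : Fin (m+1)) (1:ℂ) - EuclideanSpace.single k 1)‖ ^ 2 = 1 := by
      rw [norm_smul, mul_pow, hbase', Complex.norm_real,
        Real.norm_of_nonneg (by positivity), inv_pow,
        Real.sq_sqrt (by norm_num : (0:ℝ) ≤ 2)]
      norm_num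
    have hs : ‖((Real.sqrt Wp / (2 * ε) : ℝ) : ℂ) • LinearMap.adjoint A wbar‖ ^ 2
        = Wp / (4 * ε ^ 2) * ‖LinearMap.adjoint A wbar‖ ^ 2 := by
      rw [norm_smul, mul_pow, Complex.norm_real, Real.norm_of_nonneg (by positivity),
        div_pow, Real.sq_sqrt hWp.le]
      ring
    rw [hc, hs]
  -- effective spectral gap
  have hesg : ‖PΘ φm‖ ≤ (Θ / 2) * ‖ψbar‖ := by
    have := esg hPiOP hLam hU Θ hΘ0 hPΘ hPΘrange hLamψ
    rwa [part1] at this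
  have h2 : ‖PΘ φm‖ ^ 2 ≤ ((Θ / 2) * ‖ψbar‖) ^ 2 :=
    pow_le_pow_left₀ (norm_nonneg _) hesg 2
  have hW2 : Wtot ^ 2 = Wp * Wm := by
    rw [hWtot, Real.sq_sqrt (mul_nonneg hWp.le (le_trans (sq_nonneg _) hWm))]
  have hε2 : (0:ℝ) < ε ^ 2 := by positivity
  have hkey : Wp * ‖LinearMap.adjoint A wbar‖ ^ 2 / (4 * ε ^ 2) ≤ Wp * Wm / (4 * ε ^ 2) := by
    gcongr
  calc ‖PΘ φm‖ ^ 2 ≤ ((Θ / 2) * ‖ψbar‖) ^ 2 := h2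
    _ = (Θ ^ 2 / 4) * (1 + Wp * ‖LinearMap.adjoint A wbar‖ ^ 2 / (4 * ε ^ 2)) := by
        rw [mul_pow, hψnorm]
        ring
    _ ≤ (Θ ^ 2 / 4) * (1 + Wp * Wm / (4 * ε ^ 2)) := by
        have hq : (0:ℝ) ≤ Θ ^ 2 / 4 := by positivity
        nlinarith [hkey]
    _ = (Θ ^ 2 / 4) * (1 + Wtot ^ 2 / (4 * ε ^ 2)) := by rw [hW2]


end
end

section
/- Let H be a finite-dimensional complex inner product space, U a unitary on H, and let ε, W > 0 with W > ε. Set Θ := ε²/W and δ := ε. For Θ' ∈ [0, π] let P_{Θ'} be the orthogonal projection onto the span of all eigenvectors of U with eigenvalue e^{iθ}, θ ∈ (−π, π], |θ| ≤ Θ', and let P₀ be the projection onto the fixed space of U. Let φ₊, φ₋ ∈ H be unit vectors with ‖P₀ φ₊‖² ≥ 1 − ε² and ‖P_Θ φ₋‖² ≤ (Θ²/4)·(1 + W²/(4ε²)). Let K be a finite-dimensional complex inner product space, κ ∈ K a unit vector, and R a unitary on H ⊗ K such that R(u ⊗ κ) = u ⊗ κ for every u ∈ H with U u = u, and ‖(R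 + I)(ν ⊗ κ)‖ ≤ δ·‖ν‖ for every ν ∈ H orthogonal to the range of P_Θ. Then ‖R(((φ₊ + φ₋)/√2) ⊗ κ) − ((φ₊ − φ₋)/√2) ⊗ κ‖ < 4ε. -/
open scoped InnerProductSpace

noncomputable section

set_option maxHeartbeats 1000000 in
/-- Error analysis of the phase-detection algorithm.  Here `T`, together with the bilinear map
`tp` satisfying `⟪a ⊗ b, c ⊗ d⟫ = ⟪a, c⟫⟪b, d⟫` and whose image spans `T`, is the Hilbert-space
tensor product `H ⊗ K`.  `U` is a unitary on `H`, `Θ = ε²/W`, `δ = ε`, `P₀`/`P_Θ` are the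
projections onto the span of the eigenvectors of `U` with phase `0` resp. at most `Θ`, `κ ∈ K`
is a unit vector and `R` is a unitary on `H ⊗ K` which fixes `u ⊗ κ` for fixed points `u` of
`U` and satisfies `‖(R + I)(ν ⊗ κ)‖ ≤ δ‖ν‖` whenever `ν ⊥ range P_Θ`.  If
`‖P₀ φ₊‖² ≥ 1 − ε²` and `‖P_Θ φ₋‖² ≤ (Θ²/4)(1 + W²/(4ε²))` for unit vectors `φ₊, φ₋`, then
`‖R(((φ₊ + φ₋)/√2) ⊗ κ) − ((φ₊ − φ₋)/√2) ⊗ κ‖ < 4ε`. -/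
theorem phase_detection_error
    {H K T : Type*}
    [NormedAddCommGroup H] [InnerProductSpace ℂ H] [FiniteDimensional ℂ H]
    [NormedAddCommGroup K] [InnerProductSpace ℂ K] [FiniteDimensional ℂ K]
    [NormedAddCommGroup T] [InnerProductSpace ℂ T] [FiniteDimensional ℂ T]
    (tp : H →ₗ[ℂ] K →ₗ[ℂ] T)
    (htp : ∀ (a c : H) (b d : K), ⟪tp a b, tp c d⟫_ℂ = ⟪a, c⟫_ℂ * ⟪b, d⟫_ℂ)
    (htpspan : Submodule.span ℂ {x : T | ∃ a b, x = tp a b} = ⊤)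
    (U : H ≃ₗᵢ[ℂ] H) (ε W : ℝ) (hε : 0 < ε) (hW : ε < W)
    (P0 PΘ : H →ₗ[ℂ] H) (hP0 : IsOrthProj P0) (hPΘ : IsOrthProj PΘ)
    (hP0range : LinearMap.range P0 = Submodule.span ℂ {u : H | U u = u})
    (hPΘrange : LinearMap.range PΘ = Submodule.span ℂ
      {u : H | ∃ θ : ℝ, θ ∈ Set.Ioc (-Real.pi) Real.pi ∧ |θ| ≤ ε ^ 2 / W ∧
        U u = Complex.exp (θ * Complex.I) • u})
    (φp φm : H) (hφp1 : ‖φp‖ = 1) (hφm1 : ‖φm‖ = 1)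
    (hP0φp : 1 - ε ^ 2 ≤ ‖P0 φp‖ ^ 2)
    (hPΘφm : ‖PΘ φm‖ ^ 2 ≤ ((ε ^ 2 / W) ^ 2 / 4) * (1 + W ^ 2 / (4 * ε ^ 2)))
    (κ : K) (hκ : ‖κ‖ = 1)
    (R : T ≃ₗᵢ[ℂ] T)
    (hRfix : ∀ u : H, U u = u → R (tp u κ) = tp u κ)
    (hRrefl : ∀ ν : H, (∀ x ∈ LinearMap.range PΘ, ⟪x, ν⟫_ℂ = 0) →
      ‖R (tp ν κ) + tp ν κ‖ ≤ ε * ‖ν‖) :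
    ‖R (tp ((((Real.sqrt 2)⁻¹ : ℝ) : ℂ) • (φp + φm)) κ) -
      tp ((((Real.sqrt 2)⁻¹ : ℝ) : ℂ) • (φp - φm)) κ‖ < 4 * ε := by
  have hε2 : (0:ℝ) < ε ^ 2 := by positivity
  have hW0 : (0:ℝ) < W := lt_trans hε hW
  -- tensor norm with κ
  have hnt : ∀ a : H, ‖tp a κ‖ = ‖a‖ := by
    intro a
    have h1 : (⟪tp a κ, tp a κ⟫_ℂ) = ((‖a‖ : ℂ)) ^ 2 := by
      rw [htp, inner_self_eq_norm_sq_to_K, inner_self_eq_norm_sq_to_K, hκ]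
      norm_num
    rw [inner_self_eq_norm_sq_to_K, ← RCLike.ofReal_pow, ← Complex.ofReal_pow] at h1
    have h2 : ‖tp a κ‖ ^ 2 = ‖a‖ ^ 2 := RCLike.ofReal_injective (K := ℂ) h1
    nlinarith [norm_nonneg (tp a κ), norm_nonneg a]
  -- Pythagoras for orthogonal projections
  have hidem : ∀ (P : H →ₗ[ℂ] H), IsOrthProj P → ∀ x : H, P (P x) = P x := by
    intro P hP x
    have := congrArg (fun (Q : H →ₗ[ℂ] H) => Q x) hP.1
    simpa using this
  have horth : ∀ (P : H →ₗ[ℂ] H), IsOrthProj P → ∀ x z : H,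
      ⟪P z, x - P x⟫_ℂ = 0 := by
    intro P hP x z
    rw [inner_sub_right, hP.2 z x, hP.2 z (P x), hidem P hP x, sub_self]
  have hproj : ∀ (P : H →ₗ[ℂ] H), IsOrthProj P → ∀ x : H,
      ‖x - P x‖ ^ 2 = ‖x‖ ^ 2 - ‖P x‖ ^ 2 := by
    intro P hP x
    have h0 : ⟪P x, x - P x⟫_ℂ = 0 := horth P hP x x
    have := norm_add_sq_eq_norm_sq_add_norm_sq_of_inner_eq_zero (P x) (x - P x) h0
    have hx : P x + (x - P x) = x := by abel
    rw [hx] at this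
    linarith
  -- φp part
  have hP0P0 : P0 φp ∈ LinearMap.range P0 := ⟨φp, rfl⟩
  have hfix : U (P0 φp) = P0 φp := by
    rw [hP0range] at hP0P0
    refine Submodule.span_induction (fun u hu => hu) (by simp) ?_ ?_ hP0P0
    · intro a b _ _ ha hb; simp [ha, hb]
    · intro c a _ ha; simp [ha]
  have hep : ‖φp - P0 φp‖ ≤ ε := by
    have h1 : ‖φp - P0 φp‖ ^ 2 ≤ ε ^ 2 := by
      rw [hproj P0 hP0 φp, hφp1]; linarith
    nlinarith [norm_nonneg (φp - P0 φp)]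
  have hsplitp : tp φp κ = tp (P0 φp) κ + tp (φp - P0 φp) κ := by
    rw [map_sub, LinearMap.sub_apply]; abel
  have hplus : ‖R (tp φp κ) - tp φp κ‖ ≤ 2 * ε := by
    have hRp : R (tp φp κ) - tp φp κ
        = R (tp (φp - P0 φp) κ) - tp (φp - P0 φp) κ := by
      rw [hsplitp, map_add, hRfix (P0 φp) hfix]; abel
    rw [hRp]
    calc ‖R (tp (φp - P0 φp) κ) - tp (φp - P0 φp) κ‖
        ≤ ‖R (tp (φp - P0 φp) κ)‖ + ‖tp (φp - P0 φp) κ‖ := norm_sub_le _ _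
      _ = ‖φp - P0 φp‖ + ‖φp - P0 φp‖ := by rw [R.norm_map, hnt]
      _ ≤ 2 * ε := by linarith
  -- φm part
  have hq : ‖PΘ φm‖ ≤ ε := by
    have h2 : ((ε ^ 2 / W) ^ 2 / 4) * (1 + W ^ 2 / (4 * ε ^ 2)) ≤ ε ^ 2 := by
      have e1 : ((ε ^ 2 / W) ^ 2 / 4) * (1 + W ^ 2 / (4 * ε ^ 2))
          = (ε ^ 2 / W) ^ 2 / 4 + ε ^ 2 / 16 := by
        field_simp; ring
      have hq1 : ε ^ 2 / W ≤ ε := by rw [div_le_iff₀ hW0]; nlinarith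
      have hq2 : (ε ^ 2 / W) ^ 2 ≤ ε ^ 2 := by
        have := pow_le_pow_left₀ (by positivity) hq1 2
        simpa using this
      rw [e1]; nlinarith [sq_nonneg ε]
    nlinarith [norm_nonneg (PΘ φm)]
  have hν : ‖φm - PΘ φm‖ ≤ 1 := by
    have h1 : ‖φm - PΘ φm‖ ^ 2 ≤ 1 := by
      rw [hproj PΘ hPΘ φm, hφm1]
      nlinarith [norm_nonneg (PΘ φm)]
    nlinarith [norm_nonneg (φm - PΘ φm)]
  have hνorth : ∀ x ∈ LinearMap.range PΘ, ⟪x, φm - PΘ φm⟫_ℂ = 0 := by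
    rintro x ⟨z, rfl⟩
    exact horth PΘ hPΘ φm z
  have hsplitm : tp φm κ = tp (PΘ φm) κ + tp (φm - PΘ φm) κ := by
    rw [map_sub, LinearMap.sub_apply]; abel
  have hminus : ‖R (tp φm κ) + tp φm κ‖ ≤ 3 * ε := by
    have hRm : R (tp φm κ) + tp φm κ
        = (R (tp (PΘ φm) κ) + tp (PΘ φm) κ)
          + (R (tp (φm - PΘ φm) κ) + tp (φm - PΘ φm) κ) := by
      rw [hsplitm, map_add]; abel
    rw [hRm]
    have h1 : ‖R (tp (PΘ φm) κ) + tp (PΘ φm) κ‖ ≤ 2 * ε := by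
      calc ‖R (tp (PΘ φm) κ) + tp (PΘ φm) κ‖
          ≤ ‖R (tp (PΘ φm) κ)‖ + ‖tp (PΘ φm) κ‖ := norm_add_le _ _
        _ = ‖PΘ φm‖ + ‖PΘ φm‖ := by rw [R.norm_map, hnt]
        _ ≤ 2 * ε := by linarith
    have h2 : ‖R (tp (φm - PΘ φm) κ) + tp (φm - PΘ φm) κ‖ ≤ ε := by
      calc ‖R (tp (φm - PΘ φm) κ) + tp (φm - PΘ φm) κ‖
          ≤ ε * ‖φm - PΘ φm‖ := hRrefl _ hνorth
        _ ≤ ε * 1 := mul_le_mul_of_nonneg_left hν (le_of_lt hε)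
        _ = ε := mul_one ε
    calc ‖(R (tp (PΘ φm) κ) + tp (PΘ φm) κ)
          + (R (tp (φm - PΘ φm) κ) + tp (φm - PΘ φm) κ)‖
        ≤ ‖R (tp (PΘ φm) κ) + tp (PΘ φm) κ‖
          + ‖R (tp (φm - PΘ φm) κ) + tp (φm - PΘ φm) κ‖ := norm_add_le _ _
      _ ≤ 3 * ε := by linarith
  -- assemble
  set c : ℂ := (((Real.sqrt 2)⁻¹ : ℝ) : ℂ) with hc
  have hG : R (tp (c • (φp + φm)) κ) - tp (c • (φp - φm)) κ
      = c • ((R (tp φp κ) - tp φp κ) + (R (tp φm κ) + tp φm κ)) := by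
    simp only [map_smul, map_add, map_sub, LinearMap.smul_apply, LinearMap.add_apply,
      LinearMap.sub_apply]
    module
  rw [hG, norm_smul]
  have hcnorm : ‖c‖ = (Real.sqrt 2)⁻¹ := by
    rw [hc, Complex.norm_real, Real.norm_eq_abs, abs_of_nonneg]
    positivity
  rw [hcnorm]
  have hbound : ‖(R (tp φp κ) - tp φp κ) + (R (tp φm κ) + tp φm κ)‖ ≤ 5 * ε := by
    calc ‖(R (tp φp κ) - tp φp κ) + (R (tp φm κ) + tp φm κ)‖
        ≤ ‖R (tp φp κ) - tp φp κ‖ + ‖R (tp φm κ) + tp φm κ‖ := norm_add_le _ _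
      _ ≤ 5 * ε := by linarith
  have hs2 : (1.25:ℝ) < Real.sqrt 2 := by
    nlinarith [Real.sq_sqrt (by norm_num : (0:ℝ) ≤ 2), Real.sqrt_nonneg 2]
  have hs2pos : (0:ℝ) < Real.sqrt 2 := by linarith
  calc (Real.sqrt 2)⁻¹ * ‖(R (tp φp κ) - tp φp κ) + (R (tp φm κ) + tp φm κ)‖
      ≤ (Real.sqrt 2)⁻¹ * (5 * ε) := mul_le_mul_of_nonneg_left hbound (by positivity)
    _ < 4 * ε := by
        rw [inv_mul_lt_iff₀ hs2pos]
        nlinarith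

end
end

section
/- Let V be a finite set, W_b, W_r > 0 real numbers, s ≥ 1, and let u₀, u₁, …, u_s be distinct elements of V, with each step i ∈ {1, …, s} assigned a color c_i ∈ {black, red}; write W_{c_i} for W_b if c_i is black and W_r if c_i is red. Let (χ_v)_{v∈V} be the standard orthonormal basis of ℂ^V, and let A : ℂ^s → ℂ^V be the linear map sending the i-th standard basis vector to √W_{c_i}·(χ_{u_{i−1}} − χ_{u_i}). Let w ∈ ℂ^s be the vector whose i-th coordinate is W_{c_i}^{−1/2}. Then A w = χ_{u₀} − χ_{u_s}; and if s ≤ T and at most G of the steps are red, then ‖w‖² ≤ G/W_r + T/W_b. -/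
open scoped InnerProductSpace

noncomputable section

/-- Positive witness of the span program built from a decision tree.  For a path
`u₀, u₁, …, u_s` of distinct vertices with colored steps (`true` = black, `false` = red) of
weights `W_b`, `W_r`, the map `A` sends the `i`-th basis vector to
`√W_{cᵢ}(χ_{u_{i−1}} − χ_{uᵢ})`; the vector `w` with coordinates `W_{cᵢ}^{−1/2}` satisfies
`A w = χ_{u₀} − χ_{u_s}`, and `‖w‖² ≤ G/W_r + T/W_b` provided `s ≤ T` and at most `G` steps
are red. -/
theorem path_positive_witness
    {V : Type*} [Fintype V] [DecidableEq V]
    (Wb Wr : ℝ) (hWb : 0 < Wb) (hWr : 0 < Wr)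
    (s : ℕ) (hs : 1 ≤ s)
    (u : Fin (s + 1) → V) (hu : Function.Injective u)
    (c : Fin s → Bool)
    (A : EuclideanSpace ℂ (Fin s) →ₗ[ℂ] EuclideanSpace ℂ V)
    (hA : ∀ i : Fin s, A (EuclideanSpace.single i 1) =
      ((Real.sqrt (if c i then Wb else Wr) : ℝ) : ℂ) •
        (EuclideanSpace.single (u i.castSucc) 1 - EuclideanSpace.single (u i.succ) 1))
    (w : EuclideanSpace ℂ (Fin s))
    (hw : ∀ i : Fin s, w i = (((Real.sqrt (if c i then Wb else Wr))⁻¹ : ℝ) : ℂ))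
    (T G : ℝ) (hT : (s : ℝ) ≤ T)
    (hG : ((Finset.univ.filter (fun i : Fin s => c i = false)).card : ℝ) ≤ G) :
    A w = EuclideanSpace.single (u 0) 1 - EuclideanSpace.single (u (Fin.last s)) 1 ∧
      ‖w‖ ^ 2 ≤ G / Wr + T / Wb := by
  have hWpos : ∀ i : Fin s, (0 : ℝ) < (if c i then Wb else Wr) := by
    intro i; split <;> assumption
  constructor
  · have hdecomp : w = ∑ i : Fin s, w i • EuclideanSpace.single i (1 : ℂ) := by
      ext j
      rw [WithLp.ofLp_sum, Finset.sum_apply]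
      simp [EuclideanSpace.single_apply, Finset.sum_ite_eq']
    open scoped Fin.NatCast in
    calc A w = ∑ i : Fin s, w i • A (EuclideanSpace.single i 1) := by
            conv_lhs => rw [hdecomp]
            rw [map_sum]
            exact Finset.sum_congr rfl fun i _ => A.map_smul _ _
      _ = ∑ i : Fin s, (EuclideanSpace.single (u i.castSucc) 1
            - EuclideanSpace.single (u i.succ) 1) := by
            refine Finset.sum_congr rfl fun i _ => ?_
            rw [hA i, hw i, smul_smul]
            have : ((((Real.sqrt (if c i then Wb else Wr))⁻¹ : ℝ) : ℂ) *
                ((Real.sqrt (if c i then Wb else Wr) : ℝ) : ℂ)) = 1 := by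
              rw [← Complex.ofReal_mul, inv_mul_cancel₀ (by positivity), Complex.ofReal_one]
            rw [this, one_smul]
      _ = ∑ i ∈ Finset.range s, ((EuclideanSpace.single (u ↑i) (1 : ℂ) : EuclideanSpace ℂ V)
            - EuclideanSpace.single (u ↑(i + 1)) 1) := by
            rw [← Fin.sum_univ_eq_sum_range]
            refine Finset.sum_congr rfl fun i _ => ?_
            have h1 : ((i : ℕ) : Fin (s + 1)) = i.castSucc := by
              ext; simp [Fin.val_cast_of_lt (Nat.lt_succ_of_lt i.isLt)]
            have h2 : (((i : ℕ) + 1 : ℕ) : Fin (s + 1)) = i.succ := by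
              ext; simp [Fin.val_cast_of_lt (Nat.succ_lt_succ i.isLt)]
            rw [h1, h2]
      _ = EuclideanSpace.single (u 0) 1 - EuclideanSpace.single (u (Fin.last s)) 1 := by
            rw [Finset.sum_range_sub'
              (fun n : ℕ => (EuclideanSpace.single (u n) (1 : ℂ) : EuclideanSpace ℂ V)) s]
            have h0 : ((0 : ℕ) : Fin (s + 1)) = 0 := by simp
            have hl : ((s : ℕ) : Fin (s + 1)) = Fin.last s := by
              ext; simp [Fin.val_cast_of_lt (Nat.lt_succ_self s)]
            rw [h0, hl]
  · have hnorm : ‖w‖ ^ 2 = ∑ i : Fin s, (if c i then Wb else Wr)⁻¹ := by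
      rw [EuclideanSpace.norm_eq, Real.sq_sqrt (by positivity)]
      refine Finset.sum_congr rfl fun i _ => ?_
      rw [hw i]
      rw [Complex.norm_real, Real.norm_eq_abs,
        abs_of_nonneg (by positivity), ← Real.sqrt_inv, Real.sq_sqrt (by positivity)]
    rw [hnorm]
    have hsplit : ∑ i : Fin s, (if c i then Wb else Wr)⁻¹ =
        ((Finset.univ.filter (fun i : Fin s => c i = true)).card : ℝ) * Wb⁻¹ +
        ((Finset.univ.filter (fun i : Fin s => c i = false)).card : ℝ) * Wr⁻¹ := by
      simp only [apply_ite (Inv.inv), Finset.sum_ite, Finset.sum_const, nsmul_eq_mul,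
        Bool.not_eq_true]
    rw [hsplit]
    have h1 : ((Finset.univ.filter (fun i : Fin s => c i = false)).card : ℝ) * Wr⁻¹
        ≤ G / Wr := by
      rw [div_eq_mul_inv]
      exact mul_le_mul_of_nonneg_right hG (by positivity)
    have h2 : ((Finset.univ.filter (fun i : Fin s => c i = true)).card : ℝ) * Wb⁻¹
        ≤ T / Wb := by
      rw [div_eq_mul_inv]
      refine mul_le_mul_of_nonneg_right (le_trans ?_ hT) (by positivity)
      have := Finset.card_filter_le (Finset.univ : Finset (Fin s)) (fun i => c i = true)
      simp only [Finset.card_univ, Fintype.card_fin] at this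
      exact_mod_cast this
    linarith

end
end

section
/- Let 𝒯 be a finite rooted binary tree with vertex set V, root z₀, edges oriented from parent to child, in which every internal vertex has exactly two children, with one connecting edge colored black and the other red (a G-coloring). Let W_b, W_r > 0, write W_{c(e)} for the weight of edge e according to its color, let (χ_v)_{v∈V} be the standard orthonormal basis of ℂ^V, and let A : ℂ^E → ℂ^V be the linear map sending the basis vector of an edge e = (u, v) to √W_{c(e)}·(χ_u − χ_v). Fix a leaf z, let P be the set of vertices on the root-to-z path, and set w̄ := Σ_{v∈P} χ_v. Then: (a) for every edge e = (u, v), the inner product of A e with w̄ equals 0 if both or neither of u, v lie in P, and equals √W_{c(e)} if u ∈ P and v ∉ P; (b) the inner product of χ_{z₀} − χ_{z'} with w̄ equals 1 for every leaf z' ≠ z, and equals 0 for z' = z; (c) if the root-to-z path has at most T edges of which at most G are red, then ‖A†w̄‖² ≤ W_b·G + W_r·T. -/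
open scoped InnerProductSpace

noncomputable section

/-- Negative witness of the span program built from a binary decision tree with a G-coloring.
The tree on vertex set `V` is encoded by its root, a parent function (with `parent root = root`
by convention), the color of each non-root vertex's parent edge (`true` = black, `false` = red)
and a depth function certifying the tree structure.  Every internal vertex has exactly two
children, one black and one red.  The map `A` sends the basis vector of an edge `(parent v, v)`
(indexed by the non-root vertex `v`) to `√W_{c(v)}(χ_{parent v} − χ_v)`.  For a leaf `z` with
root-to-`z` path `P` and `w̄ := Σ_{v ∈ P} χ_v`:
(a) `⟨A e, w̄⟩ = 0` for an edge with both or neither endpoint on `P`, and `= √W_{c(e)}` if the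
edge leaves the path; (b) `⟨χ_{z₀} − χ_{z'}, w̄⟩ = 1` for leaves `z' ≠ z` and `= 0` for `z`;
(c) `‖A†w̄‖² ≤ W_b·G + W_r·T` if the path has at most `T` edges, at most `G` of them red. -/
theorem tree_negative_witness
    {V : Type*} [Fintype V] [DecidableEq V]
    (root : V) (parent : V → V) (color : V → Bool) (depth : V → ℕ)
    (hproot : parent root = root)
    (hdroot : depth root = 0)
    (hdparent : ∀ v, v ≠ root → depth (parent v) + 1 = depth v)
    (hbin : ∀ v, (∃ u, u ≠ root ∧ parent u = v) →
      ∃ b r, b ≠ r ∧ b ≠ root ∧ r ≠ root ∧ parent b = v ∧ parent r = v ∧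
        color b = true ∧ color r = false ∧
        ∀ u, u ≠ root → parent u = v → (u = b ∨ u = r))
    (Wb Wr : ℝ) (hWb : 0 < Wb) (hWr : 0 < Wr)
    (A : EuclideanSpace ℂ {v : V // v ≠ root} →ₗ[ℂ] EuclideanSpace ℂ V)
    (hA : ∀ e : {v : V // v ≠ root},
      A (EuclideanSpace.single e 1) =
        ((Real.sqrt (if color e.1 then Wb else Wr) : ℝ) : ℂ) •
          (EuclideanSpace.single (parent e.1) 1 - EuclideanSpace.single e.1 1))
    (z : V) (hz : ¬∃ u, u ≠ root ∧ parent u = z)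
    (P : Finset V) (hP : ∀ v, v ∈ P ↔ ∃ k : ℕ, parent^[k] z = v)
    (wbar : EuclideanSpace ℂ V)
    (hwbar : wbar = ∑ v ∈ P, EuclideanSpace.single v 1) :
    (∀ e : {v : V // v ≠ root},
      ((parent e.1 ∈ P ↔ e.1 ∈ P) →
        ⟪A (EuclideanSpace.single e 1), wbar⟫_ℂ = 0) ∧
      (parent e.1 ∈ P → e.1 ∉ P →
        ⟪A (EuclideanSpace.single e 1), wbar⟫_ℂ =
          ((Real.sqrt (if color e.1 then Wb else Wr) : ℝ) : ℂ))) ∧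
    (∀ z' : V, (¬∃ u, u ≠ root ∧ parent u = z') →
      (z' ≠ z →
        ⟪EuclideanSpace.single root 1 - EuclideanSpace.single z' 1, wbar⟫_ℂ = 1) ∧
      (z' = z →
        ⟪EuclideanSpace.single root 1 - EuclideanSpace.single z' 1, wbar⟫_ℂ = 0)) ∧
    (∀ T G : ℝ, (depth z : ℝ) ≤ T →
      ((P.filter (fun v => v ≠ root ∧ color v = false)).card : ℝ) ≤ G →
      ‖LinearMap.adjoint A wbar‖ ^ 2 ≤ Wb * G + Wr * T) := by
  classical
  -- basic structural facts
  have hd0 : ∀ v : V, depth v = 0 → v = root := by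
    intro v hv
    by_contra h
    have := hdparent v h
    omega
  have hiter : ∀ n (v : V), depth v = n → parent^[n] v = root := by
    intro n
    induction n with
    | zero => intro v hv; simpa using hd0 v hv
    | succ n ih =>
      intro v hv
      have hvr : v ≠ root := by rintro rfl; rw [hdroot] at hv; omega
      have hp := hdparent v hvr
      rw [Function.iterate_succ_apply]
      exact ih _ (by omega)
  have hrootfix : ∀ k, parent^[k] root = root := fun k => Function.iterate_fixed hproot k
  have hrootP : root ∈ P := (hP root).2 ⟨depth z, hiter (depth z) z rfl⟩
  have hzP : z ∈ P := (hP z).2 ⟨0, rfl⟩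
  have hparP : ∀ v ∈ P, parent v ∈ P := by
    intro v hv
    obtain ⟨k, hk⟩ := (hP v).1 hv
    exact (hP _).2 ⟨k + 1, by rw [Function.iterate_succ_apply', hk]⟩
  have hchild : ∀ v, v ∈ P → v ≠ z → ∃ c, c ≠ root ∧ parent c = v ∧ c ∈ P := by
    have key : ∀ k (v : V), parent^[k] z = v → v ≠ z →
        ∃ c, c ≠ root ∧ parent c = v ∧ c ∈ P := by
      intro k
      induction k with
      | zero => intro v hv hne; exact absurd hv.symm hne
      | succ k ih =>
        intro v hv hne
        by_cases hc : parent^[k] z = root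
        · have hvr : v = root := by
            rw [Function.iterate_succ_apply', hc, hproot] at hv; exact hv.symm
          exact ih v (by rw [hc, hvr]) hne
        · exact ⟨parent^[k] z, hc, by rw [← Function.iterate_succ_apply' parent k z]; exact hv,
            (hP _).2 ⟨k, rfl⟩⟩
    intro v hv hne
    obtain ⟨k, hk⟩ := (hP v).1 hv
    exact key k v hk hne
  have hleaf : ∀ z' : V, (¬∃ u, u ≠ root ∧ parent u = z') → z' ≠ z → z' ∉ P := by
    intro z' h hne hmem
    obtain ⟨c, hc1, hc2, _⟩ := hchild z' hmem hne
    exact h ⟨c, hc1, hc2⟩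
  -- inner product computations
  have hwv : ∀ u : V, wbar u = if u ∈ P then (1 : ℂ) else 0 := by
    intro u
    rw [hwbar]
    rw [WithLp.ofLp_sum, Finset.sum_apply]
    simp_rw [EuclideanSpace.single_apply]
    rw [Finset.sum_ite_eq P u (fun _ => (1 : ℂ))]
  have hinner : ∀ u : V, ⟪(EuclideanSpace.single u 1 : EuclideanSpace ℂ V), wbar⟫_ℂ =
      if u ∈ P then 1 else 0 := by
    intro u
    rw [EuclideanSpace.inner_single_left, hwv]
    simp
  have hAinner : ∀ e : {v : V // v ≠ root},
      ⟪A (EuclideanSpace.single e 1), wbar⟫_ℂ =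
        ((Real.sqrt (if color e.1 then Wb else Wr) : ℝ) : ℂ) *
          ((if parent e.1 ∈ P then 1 else 0) - (if e.1 ∈ P then 1 else 0)) := by
    intro e
    rw [hA, inner_smul_left, inner_sub_left, hinner, hinner, Complex.conj_ofReal]
  refine ⟨?_, ?_, ?_⟩
  · -- part (a)
    intro e
    constructor
    · intro hiff
      rw [hAinner]
      by_cases h : e.1 ∈ P
      · simp [h, hiff.2 h]
      · have h' : parent e.1 ∉ P := fun hp => h (hiff.1 hp)
        simp [h, h']
    · intro hp hnp
      rw [hAinner]
      simp [hp, hnp]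
  · -- part (b)
    intro z' hz'
    constructor
    · intro hne
      rw [inner_sub_left, hinner, hinner]
      simp [hrootP, hleaf z' hz' hne]
    · rintro rfl
      rw [inner_sub_left, hinner, hinner]
      simp [hrootP, hzP]
  · -- part (c)
    intro T G hT hG
    have hpz : ∀ e : {v : V // v ≠ root}, parent e.1 ≠ z := fun e h => hz ⟨e.1, e.2, h⟩
    -- components of the adjoint
    have hadj : ∀ e : {v : V // v ≠ root},
        (LinearMap.adjoint A wbar) e = ⟪A (EuclideanSpace.single e 1), wbar⟫_ℂ := by
      intro e
      have h1 : (LinearMap.adjoint A wbar) e =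
          ⟪(EuclideanSpace.single e 1 : EuclideanSpace ℂ {v : V // v ≠ root}),
            LinearMap.adjoint A wbar⟫_ℂ := by
        rw [EuclideanSpace.inner_single_left]
        simp
      rw [h1, LinearMap.adjoint_inner_right]
    have hterm : ∀ e : {v : V // v ≠ root},
        ‖(LinearMap.adjoint A wbar) e‖ ^ 2 =
          if parent e.1 ∈ P ∧ e.1 ∉ P then (if color e.1 then Wb else Wr) else 0 := by
      intro e
      rw [hadj, hAinner]
      set W : ℝ := if color e.1 then Wb else Wr with hW
      have hW0 : 0 ≤ W := by rw [hW]; split <;> positivity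
      by_cases h1 : parent e.1 ∈ P <;> by_cases h2 : e.1 ∈ P
      · simp [h1, h2]
      · simp only [h1, h2, if_true, if_false, not_false_iff, and_self, sub_zero, mul_one]
        rw [Complex.norm_real, Real.norm_of_nonneg (Real.sqrt_nonneg _), Real.sq_sqrt hW0]
      · exact absurd (hparP e.1 h2) h1
      · simp [h1, h2]
    have hnorm : ‖LinearMap.adjoint A wbar‖ ^ 2 =
        ∑ e : {v : V // v ≠ root}, ‖(LinearMap.adjoint A wbar) e‖ ^ 2 := by
      rw [EuclideanSpace.norm_eq, Real.sq_sqrt]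
      exact Finset.sum_nonneg fun i _ => sq_nonneg _
    -- the set of edges leaving the path
    set S : Finset {v : V // v ≠ root} :=
      Finset.univ.filter (fun e => parent e.1 ∈ P ∧ e.1 ∉ P) with hS
    have hsum : ‖LinearMap.adjoint A wbar‖ ^ 2 =
        ∑ e ∈ S, (if color e.1 then Wb else Wr) := by
      rw [hnorm, hS, Finset.sum_filter]
      exact Finset.sum_congr rfl fun e _ => hterm e
    -- sibling map
    have hsibspec : ∀ e : {v : V // v ≠ root}, e ∈ S →
        ∃ c, c ≠ root ∧ parent c = parent e.1 ∧ c ∈ P := by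
      intro e he
      rw [hS, Finset.mem_filter] at he
      exact hchild (parent e.1) he.2.1 (hpz e)
    let f : {v : V // v ≠ root} → V := fun e =>
      if h : e ∈ S then Classical.choose (hsibspec e h) else root
    have hfspec : ∀ e (he : e ∈ S),
        f e ≠ root ∧ parent (f e) = parent e.1 ∧ f e ∈ P := by
      intro e he
      simp only [f, dif_pos he]
      exact Classical.choose_spec (hsibspec e he)
    -- uniqueness of same-colored children
    have huniq : ∀ e1 e2 : {v : V // v ≠ root}, parent e1.1 = parent e2.1 →
        color e1.1 = color e2.1 → e1 = e2 := by
      intro e1 e2 hpar hcol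
      obtain ⟨b, r, hbr, hbroot, hrroot, hpb, hpr, hcb, hcr, huniq⟩ :=
        hbin (parent e1.1) ⟨e1.1, e1.2, rfl⟩
      have h1 := huniq e1.1 e1.2 rfl
      have h2 := huniq e2.1 e2.2 hpar.symm
      apply Subtype.ext
      rcases h1 with h1 | h1 <;> rcases h2 with h2 | h2
      · rw [h1, h2]
      · rw [h1, h2, hcb, hcr] at hcol; exact Bool.noConfusion hcol
      · rw [h1, h2, hcr, hcb] at hcol; exact Bool.noConfusion hcol
      · rw [h1, h2]
    have hfcolor : ∀ e (he : e ∈ S), color (f e) ≠ color e.1 := by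
      intro e he hcol
      obtain ⟨hf1, hf2, hf3⟩ := hfspec e he
      have : (⟨f e, hf1⟩ : {v : V // v ≠ root}) = e := huniq ⟨f e, hf1⟩ e hf2 hcol
      rw [hS, Finset.mem_filter] at he
      exact he.2.2 (by rw [← congrArg Subtype.val this]; exact hf3)
    have hfinj : ∀ e1 ∈ S, ∀ e2 ∈ S, color e1.1 = color e2.1 → f e1 = f e2 → e1 = e2 := by
      intro e1 he1 e2 he2 hcol hfe
      obtain ⟨_, hf2, _⟩ := hfspec e1 he1
      obtain ⟨_, hg2, _⟩ := hfspec e2 he2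
      exact huniq e1 e2 (by rw [← hf2, hfe, hg2]) hcol
    -- split by color
    set Sb : Finset {v : V // v ≠ root} := S.filter (fun e => color e.1 = true) with hSb
    set Sr : Finset {v : V // v ≠ root} := S.filter (fun e => ¬ color e.1 = true) with hSr
    have hsplit : ∑ e ∈ S, (if color e.1 then Wb else Wr) =
        Wb * Sb.card + Wr * Sr.card := by
      rw [Finset.sum_ite, Finset.sum_const, Finset.sum_const, nsmul_eq_mul, nsmul_eq_mul]
      rw [← hSb, ← hSr]
      ring
    -- card bounds
    have hcardSb : Sb.card ≤ (P.filter (fun v => v ≠ root ∧ color v = false)).card := by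
      apply Finset.card_le_card_of_injOn f
      · intro e he
        rw [hSb, Finset.mem_coe, Finset.mem_filter] at he
        obtain ⟨hf1, hf2, hf3⟩ := hfspec e he.1
        have := hfcolor e he.1
        rw [he.2] at this
        refine Finset.mem_filter.2 ⟨hf3, hf1, ?_⟩
        cases hc : color (f e)
        · rfl
        · exact absurd hc this
      · intro e1 he1 e2 he2 hfe
        rw [Finset.coe_filter, Set.mem_setOf_eq] at he1 he2
        exact hfinj e1 he1.1 e2 he2.1 (by rw [he1.2, he2.2]) hfe
    have hcardP : P.card ≤ depth z + 1 := by
      have hsub : P ⊆ (Finset.range (depth z + 1)).image (fun k => parent^[k] z) := by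
        intro v hv
        obtain ⟨k, hk⟩ := (hP v).1 hv
        rcases le_or_gt k (depth z) with h | h
        · exact Finset.mem_image.2 ⟨k, Finset.mem_range.2 (by omega), hk⟩
        · have hvr : v = root := by
            have : parent^[k] z = parent^[k - depth z] (parent^[depth z] z) := by
              rw [← Function.iterate_add_apply]
              congr 1
              omega
            rw [← hk, this, hiter (depth z) z rfl, hrootfix]
          exact Finset.mem_image.2 ⟨depth z, Finset.mem_range.2 (by omega),
            by rw [hiter (depth z) z rfl, hvr]⟩
      calc P.card ≤ _ := Finset.card_le_card hsub
        _ ≤ (Finset.range (depth z + 1)).card := Finset.card_image_le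
        _ = depth z + 1 := Finset.card_range _
    have hcardSr : Sr.card ≤ depth z := by
      have h1 : Sr.card ≤ (P.erase root).card := by
        apply Finset.card_le_card_of_injOn f
        · intro e he
          rw [hSr, Finset.mem_coe, Finset.mem_filter] at he
          obtain ⟨hf1, hf2, hf3⟩ := hfspec e he.1
          exact Finset.mem_erase.2 ⟨hf1, hf3⟩
        · intro e1 he1 e2 he2 hfe
          rw [hSr, Finset.coe_filter, Set.mem_setOf_eq] at he1 he2
          apply hfinj e1 he1.1 e2 he2.1 ?_ hfe
          rw [Bool.not_eq_true] at he1 he2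
          rw [he1.2, he2.2]
      have h2 : (P.erase root).card = P.card - 1 := Finset.card_erase_of_mem hrootP
      have h3 : 0 < P.card := Finset.card_pos.2 ⟨root, hrootP⟩
      omega
    -- combine
    rw [hsum, hsplit]
    have hb : (Sb.card : ℝ) ≤ G :=
      le_trans (by exact_mod_cast hcardSb) hG
    have hr : (Sr.card : ℝ) ≤ T :=
      le_trans (by exact_mod_cast hcardSr) hT
    have := mul_le_mul_of_nonneg_left hb hWb.le
    have := mul_le_mul_of_nonneg_left hr hWr.le
    linarith

end
end

section
/- Let 𝒯 be a finite rooted binary tree with root z₀, edges oriented from parent to child, in which every internal vertex has exactly two children, with one connecting edge colored black and the other red (a G-coloring). Let T, G ≥ 1 be integers, set W_b := 1/G and W_r := 1/T, and let A : ℂ^E → ℂ^V send the basis vector of an edge e = (u, v) to √W_{c(e)}·(χ_u − χ_v). Fix a leaf z whose root-to-z path has at most T edges of which at most G are red; let w ∈ ℂ^E be the vector supported on the path edges with coordinate W_{c(e)}^{−1/2} on each path edge e, and w̄ := Σ_{v∈P} χ_v where P is the set of path vertices. Then A w = χ_{z₀} − χ_z, ‖w‖² ≤ 2GT, ‖A†w̄‖²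 ≤ 2, and hence ‖w‖·‖A†w̄‖ ≤ 2·√(GT). -/
open scoped InnerProductSpace

noncomputable section

private lemma eucl_norm_sq {ι : Type*} [Fintype ι] (x : EuclideanSpace ℂ ι) :
    ‖x‖ ^ 2 = ∑ i, ‖x i‖ ^ 2 := by
  rw [EuclideanSpace.norm_eq, Real.sq_sqrt (by positivity)]

private lemma eucl_decompose {ι : Type*} [Fintype ι] [DecidableEq ι]
    (x : EuclideanSpace ℂ ι) :
    x = ∑ i, x i • EuclideanSpace.single i (1:ℂ) := by
  ext i
  rw [show (∑ j, x j • EuclideanSpace.single j (1:ℂ)) i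
      = ∑ j, (x j • EuclideanSpace.single j (1:ℂ)) i by rw [WithLp.ofLp_sum, Finset.sum_apply]]
  simp [EuclideanSpace.single_apply]

private lemma path_sum {V : Type*} [Fintype V] [DecidableEq V] {M : Type*} [AddCommMonoid M]
    (root : V) (parent : V → V) (z : V) (d : ℕ) (P : Finset V)
    (hne : ∀ k, k < d → parent^[k] z ≠ root)
    (hinj : ∀ j, j ≤ d → ∀ k, k ≤ d → parent^[j] z = parent^[k] z → j = k)
    (hQ : ∀ v : V, v ≠ root → (v ∈ P ↔ ∃ k, k < d ∧ parent^[k] z = v))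
    (F : V → M) :
    ∑ e ∈ Finset.univ.filter (fun e : {v : V // v ≠ root} => e.1 ∈ P), F e.1
      = ∑ k ∈ Finset.range d, F (parent^[k] z) := by
  symm
  refine Finset.sum_bij
    (i := fun k hk => (⟨parent^[k] z, hne k (Finset.mem_range.mp hk)⟩ : {v : V // v ≠ root}))
    ?_ ?_ ?_ ?_
  · intro k hk
    refine Finset.mem_filter.mpr ⟨Finset.mem_univ _, ?_⟩
    exact (hQ _ (hne k (Finset.mem_range.mp hk))).2 ⟨k, Finset.mem_range.mp hk, rfl⟩
  · intro a ha b hb h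
    exact hinj a (le_of_lt (Finset.mem_range.mp ha)) b (le_of_lt (Finset.mem_range.mp hb))
      (congrArg Subtype.val h)
  · intro e he
    obtain ⟨k, hk, hke⟩ := ((hQ e.1 e.2).1 (Finset.mem_filter.mp he).2)
    exact ⟨k, Finset.mem_range.mpr hk, Subtype.ext hke⟩
  · intro k hk; rfl

/-- Complexity bound of the span program built from a binary decision tree of depth at most
`T` with a guessing algorithm making at most `G` mistakes: with weights `W_b = 1/G`,
`W_r = 1/T`, the positive witness `w` (supported on the root-to-leaf path, with coordinate
`W_{c(e)}^{−1/2}` on each path edge) and the negative witness `w̄ = Σ_{v ∈ P} χ_v` satisfy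
`A w = χ_{z₀} − χ_z`, `‖w‖² ≤ 2GT`, `‖A†w̄‖² ≤ 2` and `‖w‖·‖A†w̄‖ ≤ 2√(GT)`. -/
theorem tree_span_program_complexity
    {V : Type*} [Fintype V] [DecidableEq V]
    (root : V) (parent : V → V) (color : V → Bool) (depth : V → ℕ)
    (hproot : parent root = root)
    (hdroot : depth root = 0)
    (hdparent : ∀ v, v ≠ root → depth (parent v) + 1 = depth v)
    (hbin : ∀ v, (∃ u, u ≠ root ∧ parent u = v) →
      ∃ b r, b ≠ r ∧ b ≠ root ∧ r ≠ root ∧ parent b = v ∧ parent r = v ∧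
        color b = true ∧ color r = false ∧
        ∀ u, u ≠ root → parent u = v → (u = b ∨ u = r))
    (T G : ℕ) (hT : 1 ≤ T) (hG : 1 ≤ G)
    (A : EuclideanSpace ℂ {v : V // v ≠ root} →ₗ[ℂ] EuclideanSpace ℂ V)
    (hA : ∀ e : {v : V // v ≠ root},
      A (EuclideanSpace.single e 1) =
        ((Real.sqrt (if color e.1 then ((G : ℝ))⁻¹ else ((T : ℝ))⁻¹) : ℝ) : ℂ) •
          (EuclideanSpace.single (parent e.1) 1 - EuclideanSpace.single e.1 1))
    (z : V) (hz : ¬∃ u, u ≠ root ∧ parent u = z)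
    (P : Finset V) (hP : ∀ v, v ∈ P ↔ ∃ k : ℕ, parent^[k] z = v)
    (hT' : depth z ≤ T)
    (hG' : (P.filter (fun v => v ≠ root ∧ color v = false)).card ≤ G)
    (w : EuclideanSpace ℂ {v : V // v ≠ root})
    (hw : ∀ e : {v : V // v ≠ root}, w e =
      if e.1 ∈ P then
        (((Real.sqrt (if color e.1 then ((G : ℝ))⁻¹ else ((T : ℝ))⁻¹))⁻¹ : ℝ) : ℂ)
      else 0)
    (wbar : EuclideanSpace ℂ V)
    (hwbar : wbar = ∑ v ∈ P, EuclideanSpace.single v 1) :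
    A w = EuclideanSpace.single root 1 - EuclideanSpace.single z 1 ∧
      ‖w‖ ^ 2 ≤ 2 * G * T ∧
      ‖LinearMap.adjoint A wbar‖ ^ 2 ≤ 2 ∧
      ‖w‖ * ‖LinearMap.adjoint A wbar‖ ≤ 2 * Real.sqrt (G * T) := by
  classical
  have hGpos : (0:ℝ) < G := by exact_mod_cast hG
  have hTpos : (0:ℝ) < T := by exact_mod_cast hT
  set d := depth z with hdz
  set Wt : V → ℝ := fun v => if color v then ((G:ℝ))⁻¹ else ((T:ℝ))⁻¹ with hWt
  have hWpos : ∀ v, 0 < Wt v := by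
    intro v; simp only [hWt]; split <;> positivity
  -- depth zero implies root
  have hzero : ∀ v, depth v = 0 → v = root := by
    intro v hv; by_contra h; have := hdparent v h; omega
  have hiter : ∀ k, k ≤ d → depth (parent^[k] z) = d - k := by
    intro k
    induction k with
    | zero => intro _; simp [hdz]
    | succ n ih =>
      intro hk
      have h1 := ih (le_of_lt (Nat.lt_of_succ_le hk))
      have hne : parent^[n] z ≠ root := by
        intro h; rw [h, hdroot] at h1; omega
      rw [Function.iterate_succ_apply']
      have := hdparent _ hne
      omega
  have hne : ∀ k, k < d → parent^[k] z ≠ root := by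
    intro k hk h
    have := hiter k hk.le
    rw [h, hdroot] at this; omega
  have hrootd : parent^[d] z = root := hzero _ (by simpa using hiter d le_rfl)
  have hconst : ∀ k, d ≤ k → parent^[k] z = root := by
    intro k hk
    obtain ⟨m, rfl⟩ := Nat.exists_eq_add_of_le hk
    rw [Nat.add_comm, Function.iterate_add_apply, hrootd, Function.iterate_fixed hproot]
  have hmemP : ∀ k, parent^[k] z ∈ P := fun k => (hP _).2 ⟨k, rfl⟩
  have hPle : ∀ v ∈ P, ∃ k, k ≤ d ∧ parent^[k] z = v := by
    intro v hv
    obtain ⟨k, hk⟩ := (hP v).1 hv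
    by_cases h : k ≤ d
    · exact ⟨k, h, hk⟩
    · exact ⟨d, le_rfl, by rw [hrootd, ← hconst k (le_of_not_ge h), hk]⟩
  have hinj : ∀ j, j ≤ d → ∀ k, k ≤ d → parent^[j] z = parent^[k] z → j = k := by
    intro j hj k hk h
    have h1 := hiter j hj
    have h2 := hiter k hk
    rw [h, h2] at h1; omega
  have hparent_mem : ∀ v ∈ P, parent v ∈ P := by
    intro v hv
    obtain ⟨k, hk⟩ := (hP v).1 hv
    exact (hP _).2 ⟨k+1, by rw [Function.iterate_succ_apply', hk]⟩
  have hQ : ∀ v : V, v ≠ root → (v ∈ P ↔ ∃ k, k < d ∧ parent^[k] z = v) := by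
    intro v hv
    constructor
    · intro h
      obtain ⟨k, hk, h2⟩ := hPle _ h
      rcases lt_or_eq_of_le hk with h3 | h3
      · exact ⟨k, h3, h2⟩
      · rw [h3, hrootd] at h2; exact absurd h2.symm hv
    · rintro ⟨k, _, rfl⟩; exact hmemP k
  have hsqrtW_pos : ∀ v, 0 < Real.sqrt (Wt v) := fun v => Real.sqrt_pos.mpr (hWpos v)
  -- red edge count on the path
  have hredcard : ((Finset.range d).filter (fun k => color (parent^[k] z) = false)).card ≤ G := by
    refine le_trans (Finset.card_le_card_of_injOn (fun k => parent^[k] z) ?_ ?_) hG'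
    · intro k hk
      simp only [Finset.mem_coe, Finset.mem_filter, Finset.mem_range] at hk ⊢
      exact ⟨hmemP k, hne k hk.1, hk.2⟩
    · intro a ha b hb h
      simp only [Finset.coe_filter, Set.mem_setOf_eq, Finset.mem_range] at ha hb
      exact hinj a ha.1.le b hb.1.le h
  have hdleT : (d:ℝ) ≤ T := by exact_mod_cast hT'
  ----------------------------------------------------------------
  -- Conjunct 1 : A w = χ_root - χ_z
  ----------------------------------------------------------------
  have hAw : A w = EuclideanSpace.single root 1 - EuclideanSpace.single z 1 := by
    conv_lhs => rw [eucl_decompose w]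
    rw [map_sum]
    have hterm : ∀ e : {v : V // v ≠ root}, A (w e • EuclideanSpace.single e 1) =
        if e.1 ∈ P then
          (EuclideanSpace.single (parent e.1) 1 - EuclideanSpace.single e.1 1 :
            EuclideanSpace ℂ V)
        else 0 := by
      intro e
      rw [map_smul, hA, hw]
      by_cases h : e.1 ∈ P
      · rw [if_pos h, if_pos h, smul_smul, ← Complex.ofReal_mul,
          inv_mul_cancel₀ (ne_of_gt (hsqrtW_pos e.1))]
        simp
      · simp [h]
    rw [Finset.sum_congr rfl (fun e _ => hterm e), ← Finset.sum_filter]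
    rw [path_sum root parent z d P hne hinj hQ
      (fun v => (EuclideanSpace.single (parent v) 1 - EuclideanSpace.single v 1 :
        EuclideanSpace ℂ V))]
    have : ∀ k ∈ Finset.range d,
        (EuclideanSpace.single (parent (parent^[k] z)) 1
          - EuclideanSpace.single (parent^[k] z) 1 : EuclideanSpace ℂ V)
        = EuclideanSpace.single (parent^[k+1] z) 1 - EuclideanSpace.single (parent^[k] z) 1 := by
      intro k _; rw [Function.iterate_succ_apply']
    rw [Finset.sum_congr rfl this,
      Finset.sum_range_sub (fun k => (EuclideanSpace.single (parent^[k] z) 1 :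
        EuclideanSpace ℂ V)) d, hrootd]
    simp
  have hWtdef : ∀ v, Wt v = if color v then ((G:ℝ))⁻¹ else ((T:ℝ))⁻¹ := fun v => rfl
  ----------------------------------------------------------------
  -- Conjunct 2 : ‖w‖² ≤ 2GT
  ----------------------------------------------------------------
  have hw2 : ‖w‖ ^ 2 ≤ 2 * G * T := by
    have hterm : ∀ e : {v : V // v ≠ root}, ‖w e‖ ^ 2
        = if e.1 ∈ P then (if color e.1 then (G:ℝ) else (T:ℝ)) else 0 := by
      intro e
      rw [hw]
      by_cases h : e.1 ∈ P
      · rw [if_pos h, if_pos h, Complex.norm_real, Real.norm_eq_abs, sq_abs, inv_pow,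
          Real.sq_sqrt (le_of_lt (hWpos e.1))]
        rw [hWtdef]
        split <;> simp
      · simp [h]
    rw [eucl_norm_sq, Finset.sum_congr rfl (fun e _ => hterm e), ← Finset.sum_filter,
      path_sum root parent z d P hne hinj hQ (fun v => if color v then (G:ℝ) else (T:ℝ))]
    have hb : ∀ k ∈ Finset.range d, (if color (parent^[k] z) then (G:ℝ) else (T:ℝ))
        ≤ G + (if color (parent^[k] z) = false then (T:ℝ) else 0) := by
      intro k _
      cases h : color (parent^[k] z) <;> simp [h]
    calc ∑ k ∈ Finset.range d, (if color (parent^[k] z) then (G:ℝ) else (T:ℝ))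
        ≤ ∑ k ∈ Finset.range d,
            ((G:ℝ) + (if color (parent^[k] z) = false then (T:ℝ) else 0)) :=
          Finset.sum_le_sum hb
      _ = d * G + ((Finset.range d).filter
            (fun k => color (parent^[k] z) = false)).card * T := by
          rw [Finset.sum_add_distrib, Finset.sum_const, ← Finset.sum_filter,
            Finset.sum_const]
          simp [nsmul_eq_mul, Finset.card_range]
      _ ≤ T * G + G * T := by
          apply add_le_add
          · exact mul_le_mul_of_nonneg_right hdleT hGpos.le
          · exact mul_le_mul_of_nonneg_right (by exact_mod_cast hredcard) hTpos.le
      _ = 2 * G * T := by ring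
  ----------------------------------------------------------------
  -- Conjunct 3 : ‖A† w̄‖² ≤ 2
  ----------------------------------------------------------------
  have hwbv : ∀ v, wbar v = if v ∈ P then (1:ℂ) else 0 := by
    intro v
    rw [hwbar, show (∑ u ∈ P, EuclideanSpace.single u (1:ℂ)) v
      = ∑ u ∈ P, (EuclideanSpace.single u (1:ℂ)) v by rw [WithLp.ofLp_sum, Finset.sum_apply]]
    simp [EuclideanSpace.single_apply]
  have hcoord : ∀ e : {v : V // v ≠ root}, (LinearMap.adjoint A wbar) e
      = if (e.1 ∉ P ∧ parent e.1 ∈ P) then ((Real.sqrt (Wt e.1) : ℝ) : ℂ) else 0 := by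
    intro e
    have h1 : (LinearMap.adjoint A wbar) e
        = ⟪EuclideanSpace.single e (1:ℂ), LinearMap.adjoint A wbar⟫_ℂ := by
      rw [EuclideanSpace.inner_single_left]; simp
    rw [h1, LinearMap.adjoint_inner_right, hA, inner_smul_left, inner_sub_left,
      EuclideanSpace.inner_single_left, EuclideanSpace.inner_single_left]
    simp only [map_one, one_mul, Complex.conj_ofReal, hwbv, ← hWtdef]
    by_cases h1 : e.1 ∈ P
    · have h2 : parent e.1 ∈ P := hparent_mem _ h1
      simp [h1, h2]
    · by_cases h2 : parent e.1 ∈ P <;> simp [h1, h2]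
  have hbar2 : ‖LinearMap.adjoint A wbar‖ ^ 2 ≤ 2 := by
    have hterm : ∀ e : {v : V // v ≠ root}, ‖(LinearMap.adjoint A wbar) e‖ ^ 2
        = if (e.1 ∉ P ∧ parent e.1 ∈ P) then Wt e.1 else 0 := by
      intro e
      rw [hcoord e]
      split
      · rw [Complex.norm_real, Real.norm_eq_abs, sq_abs, Real.sq_sqrt (hWpos e.1).le]
      · simp
    rw [eucl_norm_sq, Finset.sum_congr rfl (fun e _ => hterm e), ← Finset.sum_filter]
    set S := Finset.univ.filter
      (fun e : {v : V // v ≠ root} => e.1 ∉ P ∧ parent e.1 ∈ P) with hS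
    have hstruct : ∀ e : {v : V // v ≠ root}, e ∈ S →
        ∃ k, k < d ∧ d - depth e.1 = k ∧ parent e.1 = parent (parent^[k] z) ∧
          Wt e.1 = (if color (parent^[k] z) then ((T:ℝ))⁻¹ else ((G:ℝ))⁻¹) := by
      intro e he
      obtain ⟨heP, hpe⟩ := (Finset.mem_filter.mp he).2
      obtain ⟨j, hj, hjv⟩ := hPle _ hpe
      have hvz : parent e.1 ≠ z := fun h => hz ⟨e.1, e.2, h⟩
      have hj0 : j ≠ 0 := by rintro rfl; exact hvz hjv.symm
      have hdepthv : depth (parent e.1) = d - j := by rw [← hjv]; exact hiter j hj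
      have hk : j - 1 < d := by omega
      have hk1 : j - 1 + 1 = j := by omega
      have hupar : parent (parent^[j-1] z) = parent e.1 := by
        have h5 : parent^[j-1+1] z = parent (parent^[j-1] z) :=
          Function.iterate_succ_apply' parent (j-1) z
        rw [hk1] at h5
        rw [← h5]; exact hjv
      have hdeptheq : depth e.1 = d - (j-1) := by
        have := hdparent e.1 e.2; omega
      refine ⟨j - 1, hk, by omega, hupar.symm, ?_⟩
      obtain ⟨b, r, hbr, hbroot, hrroot, hpb, hpr, hcb, hcr, huniq⟩ :=
        hbin (parent e.1) ⟨e.1, e.2, rfl⟩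
      have hune : parent^[j-1] z ≠ root := hne _ hk
      have hu_mem := huniq _ hune hupar
      have he_mem := huniq e.1 e.2 rfl
      have hneq : e.1 ≠ parent^[j-1] z := by
        intro h; rw [h] at heP; exact heP (hmemP _)
      rw [hWtdef]
      rcases he_mem with h1 | h1 <;> rcases hu_mem with h2 | h2
      · exact absurd (h1.trans h2.symm) hneq
      · rw [h1, h2, hcb, hcr]; simp
      · rw [h1, h2, hcb, hcr]; simp
      · exact absurd (h1.trans h2.symm) hneq
    have hSinj : ∀ e ∈ S, ∀ e' ∈ S, d - depth e.1 = d - depth e'.1 → e = e' := by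
      intro e he e' he' hdd
      obtain ⟨k, hk, hke, hpe, -⟩ := hstruct e he
      obtain ⟨k', hk', hke', hpe', -⟩ := hstruct e' he'
      have hkk : k = k' := by omega
      subst hkk
      have hpp : parent e.1 = parent e'.1 := hpe.trans hpe'.symm
      obtain ⟨b, r, hbr, hbroot, hrroot, hpb, hpr, hcb, hcr, huniq⟩ :=
        hbin (parent e.1) ⟨e.1, e.2, rfl⟩
      have hune : parent^[k] z ≠ root := hne _ hk
      have hu_mem := huniq _ hune hpe.symm
      have he_mem := huniq e.1 e.2 rfl
      have he'_mem := huniq e'.1 e'.2 hpp.symm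
      have hneq : e.1 ≠ parent^[k] z := by
        intro h
        have := (Finset.mem_filter.mp he).2.1
        rw [h] at this; exact this (hmemP _)
      have hneq' : e'.1 ≠ parent^[k] z := by
        intro h
        have := (Finset.mem_filter.mp he').2.1
        rw [h] at this; exact this (hmemP _)
      apply Subtype.ext
      rcases he_mem with h1 | h1 <;> rcases he'_mem with h2 | h2 <;>
        rcases hu_mem with h3 | h3 <;>
        first
          | (exact absurd (h1.trans h3.symm) hneq)
          | (exact absurd (h2.trans h3.symm) hneq')
          | (rw [h1, h2])
    have himg : S.image (fun e => d - depth e.1) ⊆ Finset.range d := by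
      intro k hk
      obtain ⟨e, he, hke⟩ := Finset.mem_image.mp hk
      obtain ⟨k', hk', hke', -, -⟩ := hstruct e he
      rw [Finset.mem_range, ← hke]
      omega
    calc ∑ e ∈ S, Wt e.1
        = ∑ e ∈ S, (fun k => if color (parent^[k] z) then ((T:ℝ))⁻¹ else ((G:ℝ))⁻¹)
            ((fun e : {v : V // v ≠ root} => d - depth e.1) e) := by
          refine Finset.sum_congr rfl (fun e he => ?_)
          obtain ⟨k, hk, hke, -, hWe⟩ := hstruct e he
          simp only [hke]
          exact hWe
      _ = ∑ k ∈ S.image (fun e => d - depth e.1),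
            (if color (parent^[k] z) then ((T:ℝ))⁻¹ else ((G:ℝ))⁻¹) := by
          rw [Finset.sum_image hSinj]
      _ ≤ ∑ k ∈ Finset.range d,
            (if color (parent^[k] z) then ((T:ℝ))⁻¹ else ((G:ℝ))⁻¹) := by
          refine Finset.sum_le_sum_of_subset_of_nonneg himg (fun k _ _ => ?_)
          split <;> positivity
      _ ≤ ∑ k ∈ Finset.range d,
            (((T:ℝ))⁻¹ + (if color (parent^[k] z) = false then ((G:ℝ))⁻¹ else 0)) := by
          refine Finset.sum_le_sum (fun k _ => ?_)
          have h1 : (0:ℝ) ≤ ((T:ℝ))⁻¹ := by positivity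
          have h2 : (0:ℝ) ≤ ((G:ℝ))⁻¹ := by positivity
          cases h : color (parent^[k] z) <;> simp [h]
      _ = d * ((T:ℝ))⁻¹ + ((Finset.range d).filter
            (fun k => color (parent^[k] z) = false)).card * ((G:ℝ))⁻¹ := by
          rw [Finset.sum_add_distrib, Finset.sum_const, ← Finset.sum_filter,
            Finset.sum_const]
          simp [nsmul_eq_mul, Finset.card_range]
      _ ≤ T * ((T:ℝ))⁻¹ + G * ((G:ℝ))⁻¹ := by
          apply add_le_add
          · exact mul_le_mul_of_nonneg_right hdleT (by positivity)
          · exact mul_le_mul_of_nonneg_right (by exact_mod_cast hredcard) (by positivity)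
      _ = 2 := by
          rw [mul_inv_cancel₀ hTpos.ne', mul_inv_cancel₀ hGpos.ne']
          norm_num
  ----------------------------------------------------------------
  -- Conjunct 4
  ----------------------------------------------------------------
  refine ⟨hAw, hw2, hbar2, ?_⟩
  have h2a : ‖w‖ ≤ Real.sqrt (2 * G * T) := by
    rw [← Real.sqrt_sq (norm_nonneg w)]
    exact Real.sqrt_le_sqrt hw2
  have h2b : ‖LinearMap.adjoint A wbar‖ ≤ Real.sqrt 2 := by
    rw [← Real.sqrt_sq (norm_nonneg _)]
    exact Real.sqrt_le_sqrt hbar2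
  calc ‖w‖ * ‖LinearMap.adjoint A wbar‖
      ≤ Real.sqrt (2 * G * T) * Real.sqrt 2 :=
        mul_le_mul h2a h2b (norm_nonneg _) (Real.sqrt_nonneg _)
    _ = 2 * Real.sqrt (G * T) := by
        rw [← Real.sqrt_mul (by positivity),
          show (2 * (G:ℝ) * T * 2 : ℝ) = 2 ^ 2 * (G * T) by ring,
          Real.sqrt_mul (by positivity), Real.sqrt_sq (by norm_num)]

end
end

section
/- Each of the n + 2 Type I vectors and each of the n + 2 Type II vectors lies in the kernel of M̃. -/
noncomputable section

/-! The decision graph `𝒯̃` for `G = 1`.  Its vertex set has `2n + 4` elements: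
`z₀, z₁, …, z_{n+1}` (encoded `Sum.inl j`), `v₀, …, v_{n−1}` (encoded `Sum.inr (Sum.inl i)`),
`v̂₀` (encoded `Sum.inr (Sum.inr false)`) and `ẑ` (encoded `Sum.inr (Sum.inr true)`). -/

/-- Vertices of the decision graph `𝒯̃`. -/
abbrev GraphV (n : ℕ) := Fin (n + 2) ⊕ Fin n ⊕ Bool

/-- Column indices of `M̃`: root/leaf columns, black edges, red edges, pseudo-edges
(`4n + 8` columns). -/
abbrev ColIdx (n : ℕ) := Fin (n + 2) ⊕ Fin (n + 2) ⊕ Fin (n + 2) ⊕ Fin (n + 2)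

/-- Source of the red edge `r_i`: `r₀ = (z₀, v̂₀)`, `r_i = (v_{i−1}, z_i)` for `1 ≤ i ≤ n`,
`r_{n+1} = (ẑ, z_{n+1})`. -/
def redSrc (n : ℕ) (i : Fin (n + 2)) : GraphV n :=
  if h0 : (i : ℕ) = 0 then Sum.inl 0
  else if h1 : (i : ℕ) = n + 1 then Sum.inr (Sum.inr true)
  else Sum.inr (Sum.inl ⟨(i : ℕ) - 1, by have := i.isLt; omega⟩)

/-- Target of the red edge `r_i`. -/
def redTgt (n : ℕ) (i : Fin (n + 2)) : GraphV n :=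
  if (i : ℕ) = 0 then Sum.inr (Sum.inr false) else Sum.inl i

/-- Source of the black edge with index `i`:  `b̂₀ = (v̂₀, v₀)`, `b_i = (v_{i−1}, v_i)` for
`1 ≤ i ≤ n − 1`, `b̂_n = (v_{n−1}, ẑ)`, `b̂_{n+1} = (ẑ, v̂₀)`. -/
def blackSrc (n : ℕ) (i : Fin (n + 2)) : GraphV n :=
  if h0 : (i : ℕ) = 0 then Sum.inr (Sum.inr false)
  else if h1 : (i : ℕ) = n + 1 then Sum.inr (Sum.inr true)
  else Sum.inr (Sum.inl ⟨(i : ℕ) - 1, by have := i.isLt; omega⟩)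

/-- Target of the black edge with index `i`. -/
def blackTgt (n : ℕ) (i : Fin (n + 2)) : GraphV n :=
  if h0 : (i : ℕ) = n then Sum.inr (Sum.inr true)
  else if h1 : (i : ℕ) = n + 1 then Sum.inr (Sum.inr false)
  else Sum.inr (Sum.inl ⟨(i : ℕ), by have := i.isLt; omega⟩)

/-- The columns of `M̃`: `α|z₀⟩` for `e_{z₀}`, `−α|z_j⟩` for `e_{z_j}`,
`β(|u⟩ − |v⟩)` for black edges, `γ(|u⟩ − |v⟩)` for red edges and `γ(|u⟩ + |v⟩)` for
pseudo-edges. -/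
def col (n : ℕ) (α β γ : ℝ) : ColIdx n → EuclideanSpace ℂ (GraphV n)
  | Sum.inl j => (if j = 0 then (α : ℂ) else (-α : ℂ)) •
      EuclideanSpace.single (Sum.inl j) 1
  | Sum.inr (Sum.inl i) => (β : ℂ) •
      (EuclideanSpace.single (blackSrc n i) 1 - EuclideanSpace.single (blackTgt n i) 1)
  | Sum.inr (Sum.inr (Sum.inl i)) => (γ : ℂ) •
      (EuclideanSpace.single (redSrc n i) 1 - EuclideanSpace.single (redTgt n i) 1)
  | Sum.inr (Sum.inr (Sum.inr i)) => (γ : ℂ) •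
      (EuclideanSpace.single (redSrc n i) 1 + EuclideanSpace.single (redTgt n i) 1)

/-- The matrix `M̃`, as a linear map sending the standard basis vector of each column index
to the corresponding column. -/
def Mt (n : ℕ) (α β γ : ℝ) :
    EuclideanSpace ℂ (ColIdx n) →ₗ[ℂ] EuclideanSpace ℂ (GraphV n) :=
  (PiLp.basisFun 2 ℂ (ColIdx n)).constr ℂ (col n α β γ)

/-- `|r_i^+⟩ = (|r̄_i⟩ + |r_i⟩)/√2`. -/
def rplus (n : ℕ) (i : Fin (n + 2)) : EuclideanSpace ℂ (ColIdx n) :=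
  (((Real.sqrt 2)⁻¹ : ℝ) : ℂ) •
    (EuclideanSpace.single (Sum.inr (Sum.inr (Sum.inr i))) 1 +
      EuclideanSpace.single (Sum.inr (Sum.inr (Sum.inl i))) 1)

/-- `|r_i^−⟩ = (|r̄_i⟩ − |r_i⟩)/√2`. -/
def rminus (n : ℕ) (i : Fin (n + 2)) : EuclideanSpace ℂ (ColIdx n) :=
  (((Real.sqrt 2)⁻¹ : ℝ) : ℂ) •
    (EuclideanSpace.single (Sum.inr (Sum.inr (Sum.inr i))) 1 -
      EuclideanSpace.single (Sum.inr (Sum.inr (Sum.inl i))) 1)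

/-- Type I vectors: `−(√2/α)|e_{z₀}⟩ + (1/γ)|r₀⁺⟩` and, for `1 ≤ i ≤ n + 1`,
`(√2/α)|e_{z_i}⟩ + (1/γ)|r_i⁻⟩`. -/
def typeI (n : ℕ) (α γ : ℝ) (i : Fin (n + 2)) : EuclideanSpace ℂ (ColIdx n) :=
  if i = 0 then
    ((-(Real.sqrt 2 / α) : ℝ) : ℂ) • EuclideanSpace.single (Sum.inl 0) 1 +
      ((γ⁻¹ : ℝ) : ℂ) • rplus n 0
  else
    ((Real.sqrt 2 / α : ℝ) : ℂ) • EuclideanSpace.single (Sum.inl i) 1 +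
      ((γ⁻¹ : ℝ) : ℂ) • rminus n i

/-- Type II vectors: `(√2/β)|b̂₀⟩ − (1/γ)|r₀⁻⟩ + (1/γ)|r₁⁺⟩`; for `1 ≤ i ≤ n`,
`(√2/β)|bᵢ⟩ − (1/γ)|rᵢ⁺⟩ + (1/γ)|r_{i+1}⁺⟩`; and
`(√2/β)|b̂_{n+1}⟩ − (1/γ)|r_{n+1}⁺⟩ + (1/γ)|r₀⁻⟩`. -/
def typeII (n : ℕ) (β γ : ℝ) (i : Fin (n + 2)) : EuclideanSpace ℂ (ColIdx n) :=
  if h0 : (i : ℕ) = 0 then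
    ((Real.sqrt 2 / β : ℝ) : ℂ) • EuclideanSpace.single (Sum.inr (Sum.inl 0)) 1 -
      ((γ⁻¹ : ℝ) : ℂ) • rminus n 0 + ((γ⁻¹ : ℝ) : ℂ) • rplus n 1
  else if h1 : (i : ℕ) = n + 1 then
    ((Real.sqrt 2 / β : ℝ) : ℂ) • EuclideanSpace.single (Sum.inr (Sum.inl i)) 1 -
      ((γ⁻¹ : ℝ) : ℂ) • rplus n i + ((γ⁻¹ : ℝ) : ℂ) • rminus n 0
  else
    ((Real.sqrt 2 / β : ℝ) : ℂ) • EuclideanSpace.single (Sum.inr (Sum.inl i)) 1 -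
      ((γ⁻¹ : ℝ) : ℂ) • rplus n i +
      ((γ⁻¹ : ℝ) : ℂ) • rplus n ⟨(i : ℕ) + 1, by have := i.isLt; omega⟩


lemma Mt_single (n : ℕ) (α β γ : ℝ) (c : ColIdx n) :
    Mt n α β γ (EuclideanSpace.single c 1) = col n α β γ c := by
  have h : EuclideanSpace.single c (1:ℂ) = PiLp.basisFun 2 ℂ (ColIdx n) c := by
    rw [PiLp.basisFun_apply]
  rw [Mt, h, Module.Basis.constr_basis]

lemma sqrt2_sq : ((Real.sqrt 2 : ℝ) : ℂ) * ((Real.sqrt 2 : ℝ) : ℂ) = 2 := by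
  norm_cast
  rw [Real.mul_self_sqrt] <;> norm_num

lemma sqrt2_ne : (Real.sqrt 2 : ℝ) ≠ 0 := by positivity

lemma Mt_rplus (n : ℕ) (α β γ : ℝ) (i : Fin (n + 2)) :
    Mt n α β γ (rplus n i) =
      ((Real.sqrt 2 * γ : ℝ) : ℂ) • EuclideanSpace.single (redSrc n i) 1 := by
  rw [rplus, map_smul, map_add, Mt_single, Mt_single]
  show (((Real.sqrt 2)⁻¹ : ℝ) : ℂ) •
      ((γ : ℂ) • (EuclideanSpace.single (redSrc n i) 1 + EuclideanSpace.single (redTgt n i) 1)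
        + (γ : ℂ) • (EuclideanSpace.single (redSrc n i) 1 - EuclideanSpace.single (redTgt n i) 1))
      = _
  match_scalars <;> push_cast <;> field_simp [sqrt2_ne] <;>
    first
      | linear_combination (γ : ℂ) * sqrt2_sq
      | linear_combination (-γ : ℂ) * sqrt2_sq
      | linear_combination (2 * γ : ℂ) * sqrt2_sq
      | linear_combination (-2 * γ : ℂ) * sqrt2_sq
      | linear_combination

lemma Mt_rminus (n : ℕ) (α β γ : ℝ) (i : Fin (n + 2)) :
    Mt n α β γ (rminus n i) =
      ((Real.sqrt 2 * γ : ℝ) : ℂ) • EuclideanSpace.single (redTgt n i) 1 := by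
  rw [rminus, map_smul, map_sub, Mt_single, Mt_single]
  show (((Real.sqrt 2)⁻¹ : ℝ) : ℂ) •
      ((γ : ℂ) • (EuclideanSpace.single (redSrc n i) 1 + EuclideanSpace.single (redTgt n i) 1)
        - (γ : ℂ) • (EuclideanSpace.single (redSrc n i) 1 - EuclideanSpace.single (redTgt n i) 1))
      = _
  match_scalars <;> push_cast <;> field_simp [sqrt2_ne] <;>
    first
      | linear_combination (γ : ℂ) * sqrt2_sq
      | linear_combination (-γ : ℂ) * sqrt2_sq
      | linear_combination (2 * γ : ℂ) * sqrt2_sq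
      | linear_combination (-2 * γ : ℂ) * sqrt2_sq
      | linear_combination

lemma col_inl_zero (n : ℕ) (α β γ : ℝ) :
    col n α β γ (Sum.inl 0) = (α : ℂ) • EuclideanSpace.single (Sum.inl (0 : Fin (n+2))) 1 := by
  simp [col]

lemma col_inl_ne (n : ℕ) (α β γ : ℝ) (j : Fin (n + 2)) (h : j ≠ 0) :
    col n α β γ (Sum.inl j) = (-α : ℂ) • EuclideanSpace.single (Sum.inl j) 1 := by
  simp [col, h]

lemma col_black (n : ℕ) (α β γ : ℝ) (i : Fin (n + 2)) :
    col n α β γ (Sum.inr (Sum.inl i)) = (β : ℂ) •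
      (EuclideanSpace.single (blackSrc n i) 1 - EuclideanSpace.single (blackTgt n i) 1) := rfl

lemma keyII (n : ℕ) (β γ : ℝ) (hβ : β ≠ 0) (hγ : γ ≠ 0)
    (x y : EuclideanSpace ℂ (GraphV n)) :
    ((Real.sqrt 2 / β : ℝ) : ℂ) • ((β : ℂ) • (x - y)) -
      ((γ⁻¹ : ℝ) : ℂ) • (((Real.sqrt 2 * γ : ℝ) : ℂ) • x) +
      ((γ⁻¹ : ℝ) : ℂ) • (((Real.sqrt 2 * γ : ℝ) : ℂ) • y) = 0 := by
  have hβ' : (β : ℂ) ≠ 0 := by exact_mod_cast hβ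
  have hγ' : (γ : ℂ) ≠ 0 := by exact_mod_cast hγ
  match_scalars <;> push_cast <;> field_simp <;> ring

/-- Each of the `n + 2` Type I vectors and each of the `n + 2` Type II vectors lies in the
kernel of `M̃`. -/
theorem typeI_typeII_mem_kernel (n : ℕ) (hn : 1 ≤ n) (α β γ : ℝ)
    (hα : 0 < α) (hβ : 0 < β) (hγ : 0 < γ) :
    ∀ i : Fin (n + 2),
      typeI n α γ i ∈ LinearMap.ker (Mt n α β γ) ∧
      typeII n β γ i ∈ LinearMap.ker (Mt n α β γ) := by
  have hα0 : α ≠ 0 := hα.ne'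
  have hβ0 : β ≠ 0 := hβ.ne'
  have hγ0 : γ ≠ 0 := hγ.ne'
  have hα' : (α : ℂ) ≠ 0 := by exact_mod_cast hα0
  have hγ' : (γ : ℂ) ≠ 0 := by exact_mod_cast hγ0
  intro i
  constructor
  · rw [LinearMap.mem_ker, typeI]
    by_cases h : i = 0
    · rw [if_pos h, map_add, map_smul, map_smul, Mt_single, Mt_rplus, col_inl_zero]
      have hr : redSrc n 0 = Sum.inl (0 : Fin (n+2)) := by simp [redSrc]
      rw [hr]
      match_scalars
      push_cast
      field_simp
      ring
    · rw [if_neg h, map_add, map_smul, map_smul, Mt_single, Mt_rminus, col_inl_ne n α β γ i h]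
      have hv : (i : ℕ) ≠ 0 := fun h' => h (Fin.ext (by rw [h', Fin.val_zero]))
      have hr : redTgt n i = Sum.inl i := by simp [redTgt, hv]
      rw [hr]
      match_scalars
      push_cast
      field_simp
      ring
  · rw [LinearMap.mem_ker]
    by_cases h0 : (i : ℕ) = 0
    · have hi : i = 0 := Fin.ext (by simpa using h0)
      subst hi
      rw [typeII, dif_pos h0, map_add, map_sub, map_smul, map_smul, map_smul,
        Mt_single, Mt_rminus, Mt_rplus, col_black]
      have h1 : blackSrc n 0 = Sum.inr (Sum.inr false) := by simp [blackSrc]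
      have h2 : blackTgt n 0 = Sum.inr (Sum.inl ⟨0, by omega⟩) := by
        have hn0 : ¬ ((0 : ℕ) = n) := by omega
        simp [blackTgt, hn0]
      have h3 : redTgt n 0 = Sum.inr (Sum.inr false) := by simp [redTgt]
      have h4 : redSrc n 1 = Sum.inr (Sum.inl ⟨0, by omega⟩) := by
        have hv1 : ((1 : Fin (n+2)) : ℕ) = 1 := by
          simp [Fin.val_one]
        have hn1 : ¬ (n = 0) := by omega
        simp only [redSrc, hv1]
        simp [hn1]
      rw [h1, h2, h3, h4]
      exact keyII n β γ hβ0 hγ0 _ _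
    · by_cases h1 : (i : ℕ) = n + 1
      · rw [typeII, dif_neg h0, dif_pos h1, map_add, map_sub, map_smul, map_smul, map_smul,
          Mt_single, Mt_rminus, Mt_rplus, col_black]
        have e1 : blackSrc n i = Sum.inr (Sum.inr true) := by simp [blackSrc, h0, h1]
        have e2 : blackTgt n i = Sum.inr (Sum.inr false) := by
          have : (i : ℕ) ≠ n := by omega
          simp [blackTgt, this, h1]
        have e3 : redSrc n i = Sum.inr (Sum.inr true) := by simp [redSrc, h0, h1]
        have e4 : redTgt n 0 = Sum.inr (Sum.inr false) := by simp [redTgt]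
        rw [e1, e2, e3, e4]
        exact keyII n β γ hβ0 hγ0 _ _
      · rw [typeII, dif_neg h0, dif_neg h1, map_add, map_sub, map_smul, map_smul, map_smul,
          Mt_single, Mt_rplus, Mt_rplus, col_black]
        have e1 : blackSrc n i = Sum.inr (Sum.inl ⟨(i : ℕ) - 1, by have := i.isLt; omega⟩) := by
          simp [blackSrc, h0, h1]
        have e3 : redSrc n i = Sum.inr (Sum.inl ⟨(i : ℕ) - 1, by have := i.isLt; omega⟩) := by
          simp [redSrc, h0, h1]
        by_cases hn' : (i : ℕ) = n
        · have e2 : blackTgt n i = Sum.inr (Sum.inr true) := by simp [blackTgt, hn']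
          have e4 : redSrc n ⟨(i : ℕ) + 1, by have := i.isLt; omega⟩ =
              Sum.inr (Sum.inr true) := by
            simp [redSrc, hn']
          rw [e1, e2, e3, e4]
          exact keyII n β γ hβ0 hγ0 _ _
        · have e2 : blackTgt n i = Sum.inr (Sum.inl ⟨(i : ℕ), by have := i.isLt; omega⟩) := by
            simp [blackTgt, hn', h1]
          have e4 : redSrc n ⟨(i : ℕ) + 1, by have := i.isLt; omega⟩ =
              Sum.inr (Sum.inl ⟨(i : ℕ), by have := i.isLt; omega⟩) := by
            have : (i : ℕ) + 1 ≠ n + 1 := by omega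
            simp [redSrc, this, hn']
          rw [e1, e2, e3, e4]
          exact keyII n β γ hβ0 hγ0 _ _


end
end
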